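/- arXiv:2009.03295 — 4 statements merged into one kernel-verified Lean document; each statement's English description precedes it below -/
import Mathlib

section
/- Let D be a strongly connected digraph and f a vertex-direction of D. Then exactly one of the following holds: (i) some vertex dominates f; (ii) there is a strictly descending sequence ((Aᵢ,Bᵢ))_{i∈ℕ} of finite order separations of D with pairwise disjoint separators, all pointing away from f. -/
variable {V : Type*}

/-- Reachability from `a` to `b` by a directed walk staying inside the vertex set `S`. -/
def ReachIn (D : V → V → Prop) (S : Set V) (a b : V) : Prop :=
  a ∈ S ∧ b ∈ S ∧ Relation.ReflTransGen (fun x y => y ∈ S ∧ D x y) a b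

/-- `C` is a strong component of the subdigraph of `D` induced on `S`. -/
def IsSCCIn (D : V → V → Prop) (S : Set V) (C : Set V) : Prop :=
  ∃ a ∈ S, C = {b | ReachIn D S a b ∧ ReachIn D S b a}

/-- A directed ray in `D`. -/
def IsRay (D : V → V → Prop) (R : ℕ → V) : Prop :=
  Function.Injective R ∧ ∀ n, D (R n) (R (n + 1))

/-- A reverse directed ray in `D`. -/
def IsRevRay (D : V → V → Prop) (R : ℕ → V) : Prop :=
  Function.Injective R ∧ ∀ n, D (R (n + 1)) (R n)

/-- The ray `R` has a tail inside the vertex set `C`. -/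
def HasTailIn (R : ℕ → V) (C : Set V) : Prop :=
  ∃ n, ∀ m, n ≤ m → R m ∈ C

/-- A solid ray: for every finite `X` it has a tail in some strong component of `D − X`. -/
def Solid (D : V → V → Prop) (R : ℕ → V) : Prop :=
  IsRay D R ∧ ∀ X : Finset V, ∃ C, IsSCCIn D ((↑X : Set V)ᶜ) C ∧ HasTailIn R C

/-- Two solid rays are end-equivalent: for every finite `X` they have tails in the same
strong component of `D − X`. -/
def EndEquiv (D : V → V → Prop) (R R' : ℕ → V) : Prop :=
  ∀ X : Finset V, ∃ C, IsSCCIn D ((↑X : Set V)ᶜ) C ∧ HasTailIn R C ∧ HasTailIn R' C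

/-- `Ω` is an end of `D`: the class of solid rays equivalent to some solid ray. -/
def IsEnd (D : V → V → Prop) (Ω : Set (ℕ → V)) : Prop :=
  ∃ R, Solid D R ∧ Ω = {R' | Solid D R' ∧ EndEquiv D R R'}

/-- A (nonempty) directed path, recorded as its list of vertices. -/
def IsPathList (D : V → V → Prop) (l : List V) : Prop :=
  l ≠ [] ∧ l.Nodup ∧ l.Chain' D

/-- Infinitely many pairwise disjoint `A`–`B` paths in `D` (each meeting `A` precisely in its
first vertex and `B` precisely in its last vertex). -/
def DisjointPathsFrom (D : V → V → Prop) (A B : Set V) : Prop :=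
  ∃ P : ℕ → List V,
    (∀ k, IsPathList D (P k)) ∧
    (∀ j k, j ≠ k → ∀ x ∈ P j, x ∉ P k) ∧
    (∀ k, ∃ a, (P k).head? = some a ∧ a ∈ A) ∧
    (∀ k, ∃ b, (P k).getLast? = some b ∧ b ∈ B) ∧
    (∀ k, ∀ x ∈ (P k).tail, x ∉ A) ∧
    (∀ k, ∀ x ∈ (P k).dropLast, x ∉ B)

/-- A necklace in `D`: an inflated symmetric ray with finite branch sets (beads), given by its
beads together with the connecting (subdividing) paths in both directions. -/
structure Necklace (D : V → V → Prop) where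
  bead : ℕ → Set V
  fwd : ℕ → List V
  bwd : ℕ → List V
  bead_fin : ∀ n, (bead n).Finite
  bead_nonempty : ∀ n, (bead n).Nonempty
  bead_disj : ∀ m n, m ≠ n → Disjoint (bead m) (bead n)
  bead_strong : ∀ n, ∀ a ∈ bead n, ∀ b ∈ bead n, ReachIn D (bead n) a b
  fwd_path : ∀ n, IsPathList D (fwd n)
  bwd_path : ∀ n, IsPathList D (bwd n)
  fwd_head : ∀ n a, (fwd n).head? = some a → a ∈ bead n
  fwd_last : ∀ n b, (fwd n).getLast? = some b → b ∈ bead (n + 1)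
  bwd_head : ∀ n a, (bwd n).head? = some a → a ∈ bead (n + 1)
  bwd_last : ∀ n b, (bwd n).getLast? = some b → b ∈ bead n
  fwd_inner : ∀ n, ∀ x ∈ (fwd n).tail.dropLast, ∀ m, x ∉ bead m
  bwd_inner : ∀ n, ∀ x ∈ (bwd n).tail.dropLast, ∀ m, x ∉ bead m
  fwd_fwd_disj : ∀ m n, m ≠ n → ∀ x ∈ (fwd m).tail.dropLast, x ∉ (fwd n).tail.dropLast
  bwd_bwd_disj : ∀ m n, m ≠ n → ∀ x ∈ (bwd m).tail.dropLast, x ∉ (bwd n).tail.dropLast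
  fwd_bwd_disj : ∀ m n, ∀ x ∈ (fwd m).tail.dropLast, x ∉ (bwd n).tail.dropLast

/-- The vertex set of a necklace. -/
def Necklace.verts {D : V → V → Prop} (N : Necklace D) : Set V :=
  (⋃ n, N.bead n) ∪ {x | ∃ n, x ∈ N.fwd n ∨ x ∈ N.bwd n}

/-- A necklace is attached to `𝒰` if infinitely many of its beads meet every set in `𝒰`. -/
def Necklace.AttachedTo {D : V → V → Prop} (N : Necklace D) (𝒰 : Finset (Set V)) : Prop :=
  {n | ∀ U ∈ 𝒰, (N.bead n ∩ U).Nonempty}.Infinite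

/-- A necklace represents the end of the solid ray `R`: for every finite `X`, all but finitely
many beads lie in the strong component of `D − X` in which `R` has a tail. -/
def NecklaceRepresents {D : V → V → Prop} (N : Necklace D) (R : ℕ → V) : Prop :=
  ∀ X : Finset V, ∃ C, IsSCCIn D ((↑X : Set V)ᶜ) C ∧ HasTailIn R C ∧
    ∃ n₀, ∀ n, n₀ ≤ n → N.bead n ⊆ C

/-- `URankLE D 𝒰 S α`: the subdigraph of `D` induced on `S` has `𝒰`-rank at most `α`. -/
inductive URankLE (D : V → V → Prop) (𝒰 : Finset (Set V)) : Set V → Ordinal → Prop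
  | base (S : Set V) (α : Ordinal) (U : Set V) (hU : U ∈ 𝒰) (h : (U ∩ S).Finite) :
      URankLE D 𝒰 S α
  | step (S : Set V) (α : Ordinal) (X : Finset V) (r : Set V → Ordinal)
      (hr : ∀ C, IsSCCIn D (S \ ↑X) C → r C < α)
      (h : ∀ C, IsSCCIn D (S \ ↑X) C → URankLE D 𝒰 C (r C)) :
      URankLE D 𝒰 S α

/-- `D` (induced on `S`) has `𝒰`-rank exactly `α`. -/
def HasURank (D : V → V → Prop) (𝒰 : Finset (Set V)) (S : Set V) (α : Ordinal) : Prop :=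
  URankLE D 𝒰 S α ∧ ∀ β < α, ¬ URankLE D 𝒰 S β

/-- A vertex-direction of `D`. -/
def IsVertexDirection (D : V → V → Prop) (f : Finset V → Set V) : Prop :=
  (∀ X : Finset V, IsSCCIn D ((↑X : Set V)ᶜ) (f X)) ∧
  ∀ X Y : Finset V, X ⊆ Y → f Y ⊆ f X

/-- A separation `(A,B)` of `D`: `A ∪ B = V(D)` and no edge from `B∖A` to `A∖B`. -/
def IsSep (D : V → V → Prop) (A B : Set V) : Prop :=
  A ∪ B = Set.univ ∧ ∀ a ∈ B \ A, ∀ b ∈ A \ B, ¬ D a b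

/-- A finite order separation `(A,B)` points towards the vertex-direction `f`. -/
def PointsTowards (D : V → V → Prop) (f : Finset V → Set V) (A B : Set V)
    (h : (A ∩ B).Finite) : Prop :=
  f h.toFinset ⊆ B \ A

/-- A finite order separation `(A,B)` points away from the vertex-direction `f`. -/
def PointsAway (D : V → V → Prop) (f : Finset V → Set V) (A B : Set V)
    (h : (A ∩ B).Finite) : Prop :=
  f h.toFinset ⊆ A \ B

/-- The vertex `v` dominates the vertex-direction `f`. -/
def DomDir (D : V → V → Prop) (v : V) (f : Finset V → Set V) : Prop :=
  ∀ A B, IsSep D A B → ∀ h : (A ∩ B).Finite, PointsAway D f A B h → v ∈ A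

/-- An infinite `v`–`B` fan: infinitely many `v`–`B` paths meeting pairwise precisely in `v`. -/
def Fan (D : V → V → Prop) (v : V) (B : Set V) : Prop :=
  ∃ P : ℕ → List V,
    (∀ k, IsPathList D (P k)) ∧
    (∀ k, (P k).head? = some v) ∧
    (∀ k, 2 ≤ (P k).length) ∧
    (∀ k, ∃ b, (P k).getLast? = some b ∧ b ∈ B) ∧
    (∀ k, ∀ x ∈ (P k).dropLast, x ∉ B) ∧
    (∀ j k, j ≠ k → ∀ x ∈ (P j).tail, x ∉ (P k).tail)

/-- Limit edge between the ends of the solid rays `R` and `R'`. -/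
def LimitEdgeEE (D : V → V → Prop) (R R' : ℕ → V) : Prop :=
  ∀ (X : Finset V) C C', IsSCCIn D ((↑X : Set V)ᶜ) C → HasTailIn R C →
    IsSCCIn D ((↑X : Set V)ᶜ) C' → HasTailIn R' C' → C ≠ C' →
    ∃ a ∈ C, ∃ b ∈ C', D a b

/-- Limit edge from the vertex `v` to the end of the solid ray `R`. -/
def LimitEdgeVE (D : V → V → Prop) (v : V) (R : ℕ → V) : Prop :=
  ∀ (X : Finset V) C, IsSCCIn D ((↑X : Set V)ᶜ) C → HasTailIn R C → v ∉ C →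
    ∃ b ∈ C, D v b

/-- Limit edge from the end of the solid ray `R` to the vertex `v`. -/
def LimitEdgeEV (D : V → V → Prop) (R : ℕ → V) (v : V) : Prop :=
  ∀ (X : Finset V) C, IsSCCIn D ((↑X : Set V)ᶜ) C → HasTailIn R C → v ∉ C →
    ∃ a ∈ C, D a v

/-- A subdivided infinite out-star in `D` with centre `c`, given by its paths. -/
def IsStar (D : V → V → Prop) (c : V) (P : ℕ → List V) : Prop :=
  (∀ k, IsPathList D (P k)) ∧ (∀ k, (P k).head? = some c) ∧
  (∀ k, 2 ≤ (P k).length) ∧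
  (∀ j k, j ≠ k → ∀ x ∈ (P j).tail, x ∉ (P k).tail)

/-- A directed comb in `D` with spine `R`, given by its (pairwise disjoint) paths each meeting
`R` precisely in its first vertex. -/
def IsComb (D : V → V → Prop) (R : ℕ → V) (P : ℕ → List V) : Prop :=
  IsRay D R ∧ (∀ k, IsPathList D (P k)) ∧
  (∀ k, ∃ n, (P k).head? = some (R n)) ∧
  (∀ k, ∀ x ∈ (P k).tail, ∀ n, x ≠ R n) ∧
  (∀ j k, j ≠ k → ∀ x ∈ P j, x ∉ P k)

/-- A star in `D` whose `k`-th leaf is `a k`. -/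
def StarAttachedWith (D : V → V → Prop) (a : ℕ → V) : Prop :=
  ∃ c P, IsStar D c P ∧ ∀ k, (P k).getLast? = some (a k)

/-- A comb in `D` whose `k`-th tooth is `a k`. -/
def CombAttachedWith (D : V → V → Prop) (a : ℕ → V) : Prop :=
  ∃ R P, IsComb D R P ∧ ∀ k, (P k).getLast? = some (a k)

/-- `a` and `b` are consecutive entries of the list `l`. -/
def AdjInList (l : List V) (a b : V) : Prop :=
  ∃ l₁ l₂, l = l₁ ++ a :: b :: l₂

/-- The edge relation of (a subdigraph of `D` forming) the necklace `N`: all `D`-edges inside a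
bead together with the edges of the connecting paths. -/
def Necklace.edges {D : V → V → Prop} (N : Necklace D) (a b : V) : Prop :=
  D a b ∧ ((∃ n, a ∈ N.bead n ∧ b ∈ N.bead n) ∨
    (∃ n, AdjInList (N.fwd n) a b ∨ AdjInList (N.bwd n) a b))

/-- A generalized ray: a directed ray (`true`) or a reverse directed ray (`false`). -/
def IsGenRay (D : V → V → Prop) : Bool × (ℕ → V) → Prop
  | (true, R) => IsRay D R
  | (false, R) => IsRevRay D R

/-- Pre-end equivalence of generalized rays: infinitely many disjoint paths in both
directions. -/
def PreEquiv (D : V → V → Prop) (Q Q' : Bool × (ℕ → V)) : Prop :=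
  DisjointPathsFrom D (Set.range Q.2) (Set.range Q'.2) ∧
  DisjointPathsFrom D (Set.range Q'.2) (Set.range Q.2)

/-- The pre-end `γ` includes the end represented by the solid ray `R`. -/
def IncludesEnd (D : V → V → Prop) (γ : Set (Bool × (ℕ → V))) (R : ℕ → V) : Prop :=
  Solid D R ∧ ∀ R', Solid D R' → EndEquiv D R R' → (true, R') ∈ γ

/-- The set of edges of `D` from `A` to `B`. -/
def EdgesBetween (D : V → V → Prop) (A B : Set V) : Set (V × V) :=
  {e | D e.1 e.2 ∧ e.1 ∈ A ∧ e.2 ∈ B}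

/-- A bundle of `D − X`. -/
def IsBundle (D : V → V → Prop) (X : Finset V) (E : Set (V × V)) : Prop :=
  E.Nonempty ∧
  ((∃ C C', IsSCCIn D ((↑X : Set V)ᶜ) C ∧ IsSCCIn D ((↑X : Set V)ᶜ) C' ∧ C ≠ C' ∧
      E = EdgesBetween D C C') ∨
   (∃ v ∈ X, ∃ C, IsSCCIn D ((↑X : Set V)ᶜ) C ∧
      (E = EdgesBetween D {v} C ∨ E = EdgesBetween D C {v})))

/-- Compatibility `f(X) ⊇ f(Y)` between values of a direction (a strong component is regarded
as containing a bundle if it contains all its edges). -/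
def DirCompat : Set V ⊕ Set (V × V) → Set V ⊕ Set (V × V) → Prop
  | Sum.inl C, Sum.inl C' => C' ⊆ C
  | Sum.inl C, Sum.inr E' => ∀ e ∈ E', e.1 ∈ C ∧ e.2 ∈ C
  | Sum.inr _, Sum.inl _ => False
  | Sum.inr E, Sum.inr E' => E' ⊆ E

/-- A direction of `D`: maps each finite `X` to a strong component or a bundle of `D − X`,
compatibly. -/
def IsDirection (D : V → V → Prop) (f : Finset V → Set V ⊕ Set (V × V)) : Prop :=
  (∀ X : Finset V, (∃ C, IsSCCIn D ((↑X : Set V)ᶜ) C ∧ f X = Sum.inl C) ∨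
    (∃ E, IsBundle D X E ∧ f X = Sum.inr E)) ∧
  ∀ X Y : Finset V, X ⊆ Y → DirCompat (f X) (f Y)

/-- An edge-direction: a direction whose value is a bundle for some finite `X`. -/
def IsEdgeDirection (D : V → V → Prop) (f : Finset V → Set V ⊕ Set (V × V)) : Prop :=
  IsDirection D f ∧ ∃ (X : Finset V) (E : Set (V × V)), f X = Sum.inr E

/-- The three kinds of (potential) limit edges: end–end, vertex–end, end–vertex.
Ends are given as sets of (solid) rays. -/
inductive LimitEdgeObj (V : Type*) where
  | ee (Ω₁ Ω₂ : Set (ℕ → V))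
  | ve (v : V) (Ω : Set (ℕ → V))
  | ev (Ω : Set (ℕ → V)) (v : V)

/-- `l` is a limit edge of `D`. -/
def IsLimitEdge (D : V → V → Prop) : LimitEdgeObj V → Prop
  | LimitEdgeObj.ee Ω₁ Ω₂ => IsEnd D Ω₁ ∧ IsEnd D Ω₂ ∧ Ω₁ ≠ Ω₂ ∧
      ∀ R ∈ Ω₁, ∀ R' ∈ Ω₂, LimitEdgeEE D R R'
  | LimitEdgeObj.ve v Ω => IsEnd D Ω ∧ ∀ R ∈ Ω, LimitEdgeVE D v R
  | LimitEdgeObj.ev Ω v => IsEnd D Ω ∧ ∀ R ∈ Ω, LimitEdgeEV D R v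

/-- `f` agrees with the map `f_λ` for the end–end limit edge `Ω₁Ω₂`. -/
def AgreesEE (D : V → V → Prop) (Ω₁ Ω₂ : Set (ℕ → V))
    (f : Finset V → Set V ⊕ Set (V × V)) : Prop :=
  ∀ (X : Finset V), ∀ R ∈ Ω₁, ∀ R' ∈ Ω₂, ∀ C C',
    IsSCCIn D ((↑X : Set V)ᶜ) C → HasTailIn R C →
    IsSCCIn D ((↑X : Set V)ᶜ) C' → HasTailIn R' C' →
    (C = C' → f X = Sum.inl C) ∧ (C ≠ C' → f X = Sum.inr (EdgesBetween D C C'))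

/-- `f` agrees with the map `f_λ` for the vertex–end limit edge `vΩ`. -/
def AgreesVE (D : V → V → Prop) (v : V) (Ω : Set (ℕ → V))
    (f : Finset V → Set V ⊕ Set (V × V)) : Prop :=
  ∀ (X : Finset V), ∀ R ∈ Ω, ∀ C, IsSCCIn D ((↑X : Set V)ᶜ) C → HasTailIn R C →
    (v ∈ C → f X = Sum.inl C) ∧
    (v ∈ (↑X : Set V) → f X = Sum.inr (EdgesBetween D {v} C)) ∧
    (∀ C', IsSCCIn D ((↑X : Set V)ᶜ) C' → v ∈ C' → C' ≠ C →
      f X = Sum.inr (EdgesBetween D C' C))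

/-- `f` agrees with the map `f_λ` for the end–vertex limit edge `Ωv`. -/
def AgreesEV (D : V → V → Prop) (Ω : Set (ℕ → V)) (v : V)
    (f : Finset V → Set V ⊕ Set (V × V)) : Prop :=
  ∀ (X : Finset V), ∀ R ∈ Ω, ∀ C, IsSCCIn D ((↑X : Set V)ᶜ) C → HasTailIn R C →
    (v ∈ C → f X = Sum.inl C) ∧
    (v ∈ (↑X : Set V) → f X = Sum.inr (EdgesBetween D C {v})) ∧
    (∀ C', IsSCCIn D ((↑X : Set V)ᶜ) C' → v ∈ C' → C' ≠ C →
      f X = Sum.inr (EdgesBetween D C C'))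

/-- `f` agrees with `f_λ` for the limit edge `l`. -/
def Agrees (D : V → V → Prop) : LimitEdgeObj V → (Finset V → Set V ⊕ Set (V × V)) → Prop
  | LimitEdgeObj.ee Ω₁ Ω₂, f => AgreesEE D Ω₁ Ω₂ f
  | LimitEdgeObj.ve v Ω, f => AgreesVE D v Ω f
  | LimitEdgeObj.ev Ω v, f => AgreesEV D Ω v f

section DomAux

variable {D : V → V → Prop} {f : Finset V → Set V}

private lemma reachIn_list {S : Set V} {x v : V}
    (h : Relation.ReflTransGen (fun p q => q ∈ S ∧ D p q) x v) (hx : x ∈ S) :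
    ∃ l : List V, l.Chain' D ∧ l.head? = some x ∧ l.getLast? = some v ∧ ∀ p ∈ l, p ∈ S := by
  induction h with
  | refl => exact ⟨[x], List.isChain_singleton x, rfl, rfl, by simpa using hx⟩
  | tail _ hbc ih =>
    obtain ⟨l, hc, hh, hl, hmem⟩ := ih
    obtain ⟨a, t, rfl⟩ : ∃ a t, l = a :: t := by
      cases l with
      | nil => simp at hh
      | cons a t => exact ⟨a, t, rfl⟩
    refine ⟨(a :: t) ++ [_], ?_, by simpa using hh, List.getLast?_concat, ?_⟩
    · refine hc.append (List.isChain_singleton _) ?_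
      intro p hp q hq
      rw [hl] at hp
      simp only [Option.mem_def, Option.some.injEq] at hp
      simp only [List.head?_cons, Option.mem_def, Option.some.injEq] at hq
      subst hp; subst hq
      exact hbc.2
    · intro p hp
      rcases List.mem_append.mp hp with h' | h'
      · exact hmem p h'
      · simp only [List.mem_singleton] at h'
        subst h'
        exact hbc.1

private lemma cross_sep {A B : Set V} (hu : A ∪ B = Set.univ)
    (hE : ∀ a ∈ B \ A, ∀ b ∈ A \ B, ¬ D a b) :
    ∀ l : List V, l.Chain' D → ∀ x, l.head? = some x → x ∈ B →
      ∀ v, l.getLast? = some v → v ∈ A → v ∉ B → ∃ p ∈ l, p ∈ A ∧ p ∈ B := by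
  intro l
  induction l with
  | nil => intro _ x hx; simp at hx
  | cons a t ih =>
    intro hchain x hx hxB v hv hvA hvB
    have hax : a = x := by simpa using hx
    subst hax
    by_cases haA : a ∈ A
    · exact ⟨a, List.mem_cons_self, haA, hxB⟩
    · cases t with
      | nil =>
        have hav : a = v := by simpa using hv
        exact absurd (hav ▸ hvA) haA
      | cons b t' =>
        have hab : D a b := (List.isChain_cons_cons.mp hchain).1
        have hbB : b ∈ B := by
          by_cases hbA : b ∈ A
          · by_cases hbB : b ∈ B
            · exact hbB
            · exact absurd hab (hE a ⟨hxB, haA⟩ b ⟨hbA, hbB⟩)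
          · have hmem : b ∈ A ∪ B := hu ▸ Set.mem_univ b
            exact hmem.resolve_left hbA
        by_cases hbA : b ∈ A
        · exact ⟨b, List.mem_cons_of_mem _ List.mem_cons_self, hbA, hbB⟩
        · obtain ⟨p, hp, hpA, hpB⟩ := ih (List.isChain_cons_cons.mp hchain).2 b rfl hbB v
            (by simpa using hv) hvA hvB
          exact ⟨p, List.mem_cons_of_mem _ hp, hpA, hpB⟩

private lemma isSCCIn_nonempty {S C : Set V} (h : IsSCCIn D S C) : ∃ a, a ∈ C := by
  obtain ⟨a, ha, rfl⟩ := h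
  exact ⟨a, ⟨ha, ha, Relation.ReflTransGen.refl⟩, ⟨ha, ha, Relation.ReflTransGen.refl⟩⟩

private lemma isSCCIn_subset {S C : Set V} (h : IsSCCIn D S C) : C ⊆ S := by
  obtain ⟨a, _, rfl⟩ := h
  exact fun b hb => hb.1.2.1

private lemma isSCCIn_reach {S C : Set V} (h : IsSCCIn D S C) {y c : V} (hy : y ∈ C)
    (hc : c ∈ C) : ReachIn D S y c := by
  obtain ⟨a, _, rfl⟩ := h
  exact ⟨hy.2.1, hc.1.2.1, hy.2.2.2.trans hc.1.2.2⟩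

/-- A finite order separation pointing away from `f`, bundled. -/
structure GoodSep (D : V → V → Prop) (f : Finset V → Set V) where
  A : Set V
  B : Set V
  fin : (A ∩ B).Finite
  sep : IsSep D A B
  away : PointsAway D f A B fin

private lemma step_exists (hf : IsVertexDirection D f)
    (hnd : ∀ v, ¬ DomDir D v f) (g : GoodSep D f) :
    ∃ g' : GoodSep D f,
      g'.A ⊆ g.A ∧ g.B ⊆ g'.B ∧ g'.A ≠ g.A ∧ (g'.A ∩ g'.B) ∩ g.B = ∅ := by
  classical
  have hx : ∀ x : V, ∃ A' B' : Set V, ∃ hfin : (A' ∩ B').Finite,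
      IsSep D A' B' ∧ PointsAway D f A' B' hfin ∧ x ∉ A' := by
    intro x
    have h := hnd x
    unfold DomDir at h
    push_neg at h
    obtain ⟨A', B', hsep, hfin, haway, hxa⟩ := h
    exact ⟨A', B', hfin, hsep, haway, hxa⟩
  choose Ax Bx hfinx hsepx hawayx hnotx using hx
  obtain ⟨u, hu⟩ := isSCCIn_nonempty (hf.1 g.fin.toFinset)
  have huAB : u ∈ g.A \ g.B := g.away hu
  set S : Finset V := g.fin.toFinset with hS
  set T : Finset V := insert u S with hT
  set A' : Set V := g.A ∩ ⋂ x ∈ (↑T : Set V), Ax x with hA'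
  set B' : Set V := g.B ∪ ⋃ x ∈ (↑T : Set V), Bx x with hB'
  have memA' : ∀ y, y ∈ A' ↔ y ∈ g.A ∧ ∀ x ∈ T, y ∈ Ax x := by
    intro y; simp [hA']
  have memB' : ∀ y, y ∈ B' ↔ y ∈ g.B ∨ ∃ x ∈ T, y ∈ Bx x := by
    intro y; simp [hB']
  have hgu : ∀ y : V, y ∉ g.B → y ∈ g.A := by
    intro y hy
    have hmem : y ∈ g.A ∪ g.B := g.sep.1 ▸ Set.mem_univ y
    exact hmem.resolve_right hy
  have hxu : ∀ x, ∀ y : V, y ∉ Bx x → y ∈ Ax x := by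
    intro x y hy
    have hmem : y ∈ Ax x ∪ Bx x := (hsepx x).1 ▸ Set.mem_univ y
    exact hmem.resolve_right hy
  have hsep' : IsSep D A' B' := by
    constructor
    · apply Set.eq_univ_of_forall
      intro y
      by_cases hyB : y ∈ B'
      · exact Set.mem_union_right _ hyB
      · rw [memB'] at hyB; push_neg at hyB
        exact Set.mem_union_left _ ((memA' y).mpr
          ⟨hgu y hyB.1, fun x hx => hxu x y (hyB.2 x hx)⟩)
    · rintro a ⟨haB', haA'⟩ b ⟨hbA', hbB'⟩
      rw [memA'] at hbA' haA'
      rw [memB'] at hbB'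
      push_neg at hbB' haA'
      by_cases haA : a ∈ g.A
      · obtain ⟨x, hxT, hax⟩ := haA' haA
        have haBx : a ∈ Bx x := by
          by_contra hcon; exact hax (hxu x a hcon)
        exact (hsepx x).2 a ⟨haBx, hax⟩ b ⟨hbA'.2 x hxT, hbB'.2 x hxT⟩
      · have haB : a ∈ g.B := by
          by_contra hcon; exact haA (hgu a hcon)
        exact g.sep.2 a ⟨haB, haA⟩ b ⟨hbA'.1, hbB'.1⟩
  set Z : Set V := (g.A ∩ g.B) ∪ ⋃ x ∈ (↑T : Set V), (Ax x ∩ Bx x) with hZ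
  have hZfin : Z.Finite :=
    g.fin.union (Set.Finite.biUnion T.finite_toSet fun x _ => hfinx x)
  have hsub : A' ∩ B' ⊆ Z := by
    rintro y ⟨hyA, hyB⟩
    rw [memA'] at hyA
    rw [memB'] at hyB
    rcases hyB with h' | ⟨x, hxT, h'⟩
    · exact Set.mem_union_left _ ⟨hyA.1, h'⟩
    · exact Set.mem_union_right _ (Set.mem_biUnion (Finset.mem_coe.mpr hxT) ⟨hyA.2 x hxT, h'⟩)
  have hfin' : (A' ∩ B').Finite := hZfin.subset hsub
  have hZc : f hZfin.toFinset ⊆ A' \ B' := by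
    have h1 : f hZfin.toFinset ⊆ g.A \ g.B := by
      refine Set.Subset.trans (hf.2 S hZfin.toFinset ?_) g.away
      intro y hy
      rw [Set.Finite.mem_toFinset]
      rw [hS, Set.Finite.mem_toFinset] at hy
      exact Set.mem_union_left _ hy
    have h2 : ∀ x ∈ T, f hZfin.toFinset ⊆ Ax x \ Bx x := by
      intro x hxT
      refine Set.Subset.trans (hf.2 (hfinx x).toFinset hZfin.toFinset ?_) (hawayx x)
      intro y hy
      rw [Set.Finite.mem_toFinset] at hy ⊢
      exact Set.mem_union_right _ (Set.mem_biUnion (Finset.mem_coe.mpr hxT) hy)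
    intro y hy
    refine ⟨(memA' y).mpr ⟨(h1 hy).1, fun x hx => (h2 x hx hy).1⟩, ?_⟩
    rw [memB']; push_neg
    exact ⟨(h1 hy).2, fun x hx => (h2 x hx hy).2⟩
  have haway' : PointsAway D f A' B' hfin' := by
    intro y hy
    have hZS : f hZfin.toFinset ⊆ f hfin'.toFinset := by
      apply hf.2
      intro p hp
      rw [Set.Finite.mem_toFinset] at hp ⊢
      exact hsub hp
    obtain ⟨c, hc⟩ := isSCCIn_nonempty (hf.1 hZfin.toFinset)
    have hcAB : c ∈ A' \ B' := hZc hc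
    have hy' : y ∉ A' ∩ B' := by
      have hmem := isSCCIn_subset (hf.1 hfin'.toFinset) hy
      simpa [Set.Finite.coe_toFinset] using hmem
    by_cases hyA : y ∈ A'
    · exact ⟨hyA, fun hyB => hy' ⟨hyA, hyB⟩⟩
    · exfalso
      have hyB : y ∈ B' := by
        have hmem : y ∈ A' ∪ B' := hsep'.1 ▸ Set.mem_univ y
        exact hmem.resolve_left hyA
      have hreach : ReachIn D ((↑hfin'.toFinset : Set V))ᶜ y c :=
        isSCCIn_reach (hf.1 hfin'.toFinset) hy (hZS hc)
      obtain ⟨l, hchain, hhead, hlast, hmem⟩ := reachIn_list hreach.2.2 hreach.1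
      obtain ⟨p, hpl, hpA, hpB⟩ := cross_sep hsep'.1 hsep'.2 l hchain y hhead hyB c hlast
        hcAB.1 hcAB.2
      have hpc := hmem p hpl
      rw [Set.mem_compl_iff, Set.Finite.coe_toFinset] at hpc
      exact hpc ⟨hpA, hpB⟩
  refine ⟨⟨A', B', hfin', hsep', haway'⟩, ?_, ?_, ?_, ?_⟩
  · exact fun y hy => ((memA' y).mp hy).1
  · exact fun y hy => Set.mem_union_left _ hy
  · intro hEq
    have huA' : u ∈ A' := by
      have hh := huAB.1
      rw [← hEq] at hh
      exact hh
    exact hnotx u (((memA' u).mp huA').2 u (Finset.mem_insert_self u S))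
  · apply Set.eq_empty_iff_forall_notMem.mpr
    rintro y ⟨⟨hyA', _⟩, hyB⟩
    have hyA : y ∈ g.A := ((memA' y).mp hyA').1
    have hyT : y ∈ T := Finset.mem_insert_of_mem (by rw [hS, Set.Finite.mem_toFinset]; exact ⟨hyA, hyB⟩)
    exact hnotx y (((memA' y).mp hyA').2 y hyT)

private lemma exists_descending (hf : IsVertexDirection D f) (hnd : ∀ v, ¬ DomDir D v f) :
    ∃ (A B : ℕ → Set V) (h : ∀ i, (A i ∩ B i).Finite),
      (∀ i, IsSep D (A i) (B i)) ∧
      (∀ i, PointsAway D f (A i) (B i) (h i)) ∧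
      (∀ i, A (i + 1) ⊆ A i ∧ B i ⊆ B (i + 1) ∧ (A (i + 1) ≠ A i ∨ B (i + 1) ≠ B i)) ∧
      (∀ i j, i ≠ j → Disjoint (A i ∩ B i) (A j ∩ B j)) := by
  classical
  choose step h1 h2 h3 h4 using step_exists hf hnd
  let g0 : GoodSep D f :=
    { A := Set.univ, B := ∅,
      fin := by simp
      sep := ⟨by simp, fun a ha => absurd ha.1 (Set.notMem_empty a)⟩
      away := fun y _ => ⟨Set.mem_univ y, Set.notMem_empty y⟩ }
  let seq : ℕ → GoodSep D f := fun n => Nat.rec g0 (fun _ g => step g) n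
  have hBmono : ∀ i j, i ≤ j → (seq i).B ⊆ (seq j).B := by
    intro i j hij
    induction hij with
    | refl => exact subset_rfl
    | step _ ih => exact ih.trans (h2 _)
  refine ⟨fun i => (seq i).A, fun i => (seq i).B, fun i => (seq i).fin,
    fun i => (seq i).sep, fun i => (seq i).away, ?_, ?_⟩
  · exact fun i => ⟨h1 (seq i), h2 (seq i), Or.inl (h3 (seq i))⟩
  · have key : ∀ i j, i < j →
        Disjoint ((seq i).A ∩ (seq i).B) ((seq j).A ∩ (seq j).B) := by
      intro i j hij
      rw [Set.disjoint_left]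
      intro y hyi hyj
      obtain ⟨j', rfl⟩ : ∃ j', j = j' + 1 := ⟨j - 1, by omega⟩
      have h4' := h4 (seq j')
      have hyB : y ∈ (seq j').B := hBmono i j' (by omega) hyi.2
      exact Set.eq_empty_iff_forall_notMem.mp h4' y ⟨hyj, hyB⟩
    intro i j hij
    rcases lt_or_gt_of_ne hij with hlt | hlt
    · exact key i j hlt
    · exact (key j i hlt).symm

private lemma not_both (hsc : ∀ a b : V, ReachIn D Set.univ a b) {v : V} (hv : DomDir D v f)
    (A B : ℕ → Set V) (h : ∀ i, (A i ∩ B i).Finite)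
    (hsep : ∀ i, IsSep D (A i) (B i))
    (haway : ∀ i, PointsAway D f (A i) (B i) (h i))
    (hdesc : ∀ i, A (i + 1) ⊆ A i ∧ B i ⊆ B (i + 1) ∧ (A (i + 1) ≠ A i ∨ B (i + 1) ≠ B i))
    (hdisj : ∀ i j, i ≠ j → Disjoint (A i ∩ B i) (A j ∩ B j)) : False := by
  classical
  have hvA : ∀ i, v ∈ A i := fun i => hv (A i) (B i) (hsep i) (h i) (haway i)
  have hBmono : ∀ i j, i ≤ j → B i ⊆ B j := by
    intro i j hij
    induction hij with
    | refl => exact subset_rfl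
    | step _ ih => exact ih.trans (hdesc _).2.1
  have hvB : ∀ i, v ∉ B i := by
    intro i hvBi
    have hm1 : v ∈ A i ∩ B i := ⟨hvA i, hvBi⟩
    have hm2 : v ∈ A (i + 1) ∩ B (i + 1) := ⟨hvA _, hBmono i (i + 1) (by omega) hvBi⟩
    exact Set.disjoint_left.mp (hdisj i (i + 1) (by omega)) hm1 hm2
  have hBne : ∃ j x, x ∈ B j := by
    by_contra hc; push_neg at hc
    have hAu : ∀ i, A i = Set.univ := by
      intro i
      apply Set.eq_univ_of_forall
      intro y
      have hmem : y ∈ A i ∪ B i := (hsep i).1 ▸ Set.mem_univ y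
      exact hmem.resolve_right (hc i y)
    have hBe : ∀ i, B i = ∅ := fun i => Set.eq_empty_iff_forall_notMem.mpr (hc i)
    rcases (hdesc 0).2.2 with hne | hne
    · exact hne (by rw [hAu, hAu])
    · exact hne (by rw [hBe, hBe])
  obtain ⟨j, x, hxB⟩ := hBne
  obtain ⟨l, hchain, hhead, hlast, -⟩ := reachIn_list (hsc x v).2.2 (Set.mem_univ x)
  have hcross : ∀ n : ℕ, ∃ p ∈ l, p ∈ A (j + n) ∩ B (j + n) := by
    intro n
    have hxBm : x ∈ B (j + n) := hBmono j (j + n) (by omega) hxB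
    obtain ⟨p, hp, hp1, hp2⟩ := cross_sep (hsep (j + n)).1 (hsep (j + n)).2 l hchain x hhead
      hxBm v hlast (hvA _) (hvB _)
    exact ⟨p, hp, hp1, hp2⟩
  choose p hpl hpm using hcross
  have hinj : Function.Injective p := by
    intro n n' he
    by_contra hne
    have hne' : j + n ≠ j + n' := by omega
    exact Set.disjoint_left.mp (hdisj _ _ hne') (hpm n) (he ▸ hpm n')
  have hinf : {q | q ∈ l}.Infinite := Set.infinite_of_injective_forall_mem hinj hpl
  exact hinf l.finite_toSet

end DomAux

/-- In a strongly connected digraph, a vertex-direction is dominated or (exclusively) there is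
a strictly descending sequence of finite order separations with pairwise disjoint separators
all pointing away from it. -/
theorem dominated_xor_descending_separations (D : V → V → Prop)
    (hsc : ∀ a b : V, ReachIn D Set.univ a b)
    (f : Finset V → Set V) (hf : IsVertexDirection D f) :
    Xor' (∃ v, DomDir D v f)
      (∃ (A B : ℕ → Set V) (h : ∀ i, (A i ∩ B i).Finite),
        (∀ i, IsSep D (A i) (B i)) ∧
        (∀ i, PointsAway D f (A i) (B i) (h i)) ∧
        (∀ i, A (i + 1) ⊆ A i ∧ B i ⊆ B (i + 1) ∧ (A (i + 1) ≠ A i ∨ B (i + 1) ≠ B i)) ∧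
        (∀ i j, i ≠ j → Disjoint (A i ∩ B i) (A j ∩ B j))) := by
  by_cases hdom : ∃ v, DomDir D v f
  · left
    refine ⟨hdom, ?_⟩
    rintro ⟨A, B, h, hsep, haway, hdesc, hdisj⟩
    obtain ⟨v, hv⟩ := hdom
    exact not_both hsc hv A B h hsep haway hdesc hdisj
  · right
    exact ⟨exists_descending hf (fun v hv => hdom ⟨v, hv⟩), hdom⟩
end

section
/- Let D be a strongly connected digraph, f a vertex-direction of D, and ((Aᵢ,Bᵢ))_{i∈ℕ} a strictly descending sequence of finite order separations with pairwise disjoint separators all pointing away from f. Let U be a set consisting of one vertex of f(Aᵢ ∩ Bᵢ) for each i ∈ ℕ. Then f is the unique vertex-direction of D in the closure of U. -/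
variable {V : Type*}

section AuxLemmas

variable {D : V → V → Prop}

lemma ReachIn.trans' {S : Set V} {a b c : V} (h1 : ReachIn D S a b) (h2 : ReachIn D S b c) :
    ReachIn D S a c := ⟨h1.1, h2.2.1, h1.2.2.trans h2.2.2⟩

lemma sccIn_subset {S C : Set V} (hC : IsSCCIn D S C) : C ⊆ S := by
  obtain ⟨a, ha, rfl⟩ := hC
  intro b hb
  exact hb.1.2.1

lemma sccIn_nonempty {S C : Set V} (hC : IsSCCIn D S C) : C.Nonempty := by
  obtain ⟨a, ha, rfl⟩ := hC
  exact ⟨a, ⟨ha, ha, .refl⟩, ⟨ha, ha, .refl⟩⟩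

lemma sccIn_eq_of_mem {S C : Set V} (hC : IsSCCIn D S C) {c : V} (hc : c ∈ C) :
    C = {b | ReachIn D S c b ∧ ReachIn D S b c} := by
  obtain ⟨a, ha, rfl⟩ := hC
  obtain ⟨hac, hca⟩ := hc
  ext b
  constructor
  · rintro ⟨hab, hba⟩
    exact ⟨hca.trans' hab, hba.trans' hac⟩
  · rintro ⟨hcb, hbc⟩
    exact ⟨hac.trans' hcb, hbc.trans' hca⟩

lemma sccIn_eq_of_mem_mem {S C C' : Set V} (hC : IsSCCIn D S C) (hC' : IsSCCIn D S C')
    {c : V} (hc : c ∈ C) (hc' : c ∈ C') : C = C' := by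
  rw [sccIn_eq_of_mem hC hc, sccIn_eq_of_mem hC' hc']

lemma walk_in_scc {S C : Set V} (hC : IsSCCIn D S C) {b c : V} (hb : b ∈ C) (hc : c ∈ C) :
    Relation.ReflTransGen (fun x y => y ∈ C ∧ D x y) b c := by
  obtain ⟨a, ha, rfl⟩ := hC
  obtain ⟨hab, hba⟩ := hb
  obtain ⟨hac, hca⟩ := hc
  have main : ∀ {w}, Relation.ReflTransGen (fun x y => y ∈ S ∧ D x y) w c →
      ReachIn D S a w →
      Relation.ReflTransGen
        (fun x y => y ∈ {b | ReachIn D S a b ∧ ReachIn D S b a} ∧ D x y) w c := by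
    intro w hw
    induction hw using Relation.ReflTransGen.head_induction_on with
    | refl => intro _; exact .refl
    | head hstep hrest ih =>
      intro haw
      rename_i w' y
      have hay : ReachIn D S a y := ⟨ha, hstep.1, haw.2.2.tail ⟨hstep.1, hstep.2⟩⟩
      have hya : ReachIn D S y a := ⟨hstep.1, ha, hrest.trans hca.2.2⟩
      exact Relation.ReflTransGen.head ⟨⟨hay, hya⟩, hstep.2⟩ (ih hay)
  exact main (hba.2.2.trans hac.2.2) hab

lemma scc_subset_scc {S S' C C' : Set V} (hC : IsSCCIn D S C) (hC' : IsSCCIn D S' C')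
    (hCS' : C ⊆ S') (hsub : C' ⊆ C) : C ⊆ C' := by
  obtain ⟨a', ha'⟩ := sccIn_nonempty hC'
  intro b hb
  have h1 := walk_in_scc hC (hsub ha') hb
  have h2 := walk_in_scc hC hb (hsub ha')
  have mono : ∀ x y, (y ∈ C ∧ D x y) → (y ∈ S' ∧ D x y) := fun x y hxy => ⟨hCS' hxy.1, hxy.2⟩
  have r1 : ReachIn D S' a' b := ⟨hCS' (hsub ha'), hCS' hb, Relation.ReflTransGen.mono mono a' b h1⟩
  have r2 : ReachIn D S' b a' := ⟨hCS' hb, hCS' (hsub ha'), Relation.ReflTransGen.mono mono b a' h2⟩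
  rw [sccIn_eq_of_mem hC' ha']
  exact ⟨r1, r2⟩

end AuxLemmas

/-- Given a strictly descending sequence of finite order separations with disjoint separators
pointing away from `f`, and `U` consisting of one vertex of `f` of each separator, `f` is the
unique vertex-direction in the closure of `U`. -/
theorem unique_direction_in_closure (D : V → V → Prop)
    (hsc : ∀ a b : V, ReachIn D Set.univ a b)
    (f : Finset V → Set V) (hf : IsVertexDirection D f)
    (A B : ℕ → Set V) (h : ∀ i, (A i ∩ B i).Finite)
    (hsep : ∀ i, IsSep D (A i) (B i))
    (haway : ∀ i, PointsAway D f (A i) (B i) (h i))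
    (hdesc : ∀ i, A (i + 1) ⊆ A i ∧ B i ⊆ B (i + 1) ∧ (A (i + 1) ≠ A i ∨ B (i + 1) ≠ B i))
    (hdisj : ∀ i j, i ≠ j → Disjoint (A i ∩ B i) (A j ∩ B j))
    (u : ℕ → V) (hu : ∀ i, u i ∈ f (h i).toFinset) :
    (∀ X : Finset V, (f X ∩ Set.range u).Nonempty) ∧
    ∀ g, IsVertexDirection D g → (∀ X : Finset V, (g X ∩ Set.range u).Nonempty) → g = f := by
  classical
  have Amono : ∀ {i j : ℕ}, i ≤ j → A j ⊆ A i := by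
    intro i j hij
    induction j, hij using Nat.le_induction with
    | base => exact subset_rfl
    | succ n hn ih => exact (hdesc n).1.trans ih
  have Bmono : ∀ {i j : ℕ}, i ≤ j → B i ⊆ B j := by
    intro i j hij
    induction j, hij using Nat.le_induction with
    | base => exact subset_rfl
    | succ n hn ih => exact ih.trans (hdesc n).2.1
  have sdmono : ∀ {i j : ℕ}, i ≤ j → A j \ B j ⊆ A i \ B i := by
    intro i j hij x hx
    exact ⟨Amono hij hx.1, fun hB => hx.2 (Bmono hij hB)⟩
  -- No vertex lies in every `A j \ B j`.
  have hT : ∀ x : V, ∃ j, x ∉ A j \ B j := by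
    by_contra hcon
    push_neg at hcon
    obtain ⟨x, hx⟩ := hcon
    -- some vertex lies in `B 1`
    obtain ⟨v, hv⟩ : ∃ v, v ∈ B 1 := by
      obtain ⟨hA0, hB0, hne | hne⟩ := hdesc 0
      · obtain ⟨v, hv0, hv1⟩ := Set.exists_of_ssubset (hA0.ssubset_of_ne hne)
        refine ⟨v, ?_⟩
        have hmem : v ∈ A 1 ∪ B 1 := by rw [(hsep 1).1]; trivial
        exact hmem.resolve_left hv1
      · obtain ⟨v, hv1, _⟩ := Set.exists_of_ssubset (hB0.ssubset_of_ne (Ne.symm hne))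
        exact ⟨v, hv1⟩
    -- the set `⋂ (A j \ B j)` is closed under taking in-neighbours
    have hclosed : ∀ w z, D w z → (∀ j, z ∈ A j \ B j) → (∀ j, w ∈ A j \ B j) := by
      intro w z hwz hz
      have hwA : ∀ j, w ∈ A j := by
        intro j
        by_contra hwA
        have hwB : w ∈ B j := by
          have hmem : w ∈ A j ∪ B j := by rw [(hsep j).1]; trivial
          exact hmem.resolve_left hwA
        exact (hsep j).2 w ⟨hwB, hwA⟩ z (hz j) hwz
      intro j
      refine ⟨hwA j, fun hwB => ?_⟩
      have h1 : w ∈ A j ∩ B j := ⟨hwA j, hwB⟩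
      have h2 : w ∈ A (j + 1) ∩ B (j + 1) := ⟨hwA _, Bmono (Nat.le_succ j) hwB⟩
      exact (Set.disjoint_left.mp (hdisj j (j + 1) (by omega))) h1 h2
    have hwalk : ∀ w, Relation.ReflTransGen (fun a b => b ∈ (Set.univ : Set V) ∧ D a b) w x →
        (∀ j, w ∈ A j \ B j) := by
      intro w hw
      induction hw using Relation.ReflTransGen.head_induction_on with
      | refl => exact hx
      | head hstep _ ih => exact hclosed _ _ hstep.2 ih
    exact (hwalk v (hsc v x).2.2 1).2 hv
  have hXj : ∀ X : Finset V, ∃ j, ∀ x ∈ X, x ∉ A j \ B j := by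
    intro X
    choose jx hjx using hT
    exact ⟨X.sup jx, fun x hx hmem => hjx x (sdmono (Finset.le_sup hx) hmem)⟩
  -- key lemma: if `X` avoids `A k \ B k` then `f(S_k) ⊆ f(X)`
  have hkey : ∀ (X : Finset V) (k : ℕ), (∀ x ∈ X, x ∉ A k \ B k) →
      f (h k).toFinset ⊆ f X := by
    intro X k hXk
    set Sk := (h k).toFinset with hSkdef
    have hfsub : f Sk ⊆ A k \ B k := haway k
    have hY : f (X ∪ Sk) ⊆ f Sk := hf.2 _ _ Finset.subset_union_right
    have hYX : f (X ∪ Sk) ⊆ f X := hf.2 _ _ Finset.subset_union_left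
    have hCS' : f Sk ⊆ (↑(X ∪ Sk) : Set V)ᶜ := by
      intro b hb
      have hbAB := hfsub hb
      intro hmem
      rw [Finset.coe_union, Set.mem_union] at hmem
      rcases hmem with hmem | hmem
      · exact hXk b hmem hbAB
      · rw [hSkdef, Set.Finite.coe_toFinset] at hmem
        exact hbAB.2 hmem.2
    exact (scc_subset_scc (hf.1 Sk) (hf.1 (X ∪ Sk)) hCS' hY).trans hYX
  refine ⟨fun X => ?_, fun g hg hgu => ?_⟩
  · obtain ⟨j, hj⟩ := hXj X
    exact ⟨u j, hkey X j hj (hu j), j, rfl⟩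
  · funext X
    obtain ⟨j, hj⟩ := hXj X
    set Y : Finset V := X ∪ (Finset.range j).image u with hYdef
    obtain ⟨v, hvg, hvr⟩ := hgu Y
    obtain ⟨k, rfl⟩ := hvr
    have hgYsub : g Y ⊆ (↑Y : Set V)ᶜ := sccIn_subset (hg.1 Y)
    have hkj : j ≤ k := by
      by_contra hlt
      push_neg at hlt
      refine hgYsub hvg ?_
      rw [hYdef, Finset.coe_union, Set.mem_union]
      right
      rw [Finset.coe_image, Set.mem_image]
      exact ⟨k, by simpa using hlt, rfl⟩
    have hfk : u k ∈ f X :=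
      hkey X k (fun x hx hmem => hj x hx (sdmono hkj hmem)) (hu k)
    have hgk : u k ∈ g X := hg.2 X Y Finset.subset_union_left hvg
    exact sccIn_eq_of_mem_mem (hg.1 X) (hf.1 X) hgk hfk
end

section
/- For a digraph D and distinct ends ω, η of D, the following are equivalent: (i) D has a limit edge from ω to η; (ii) there exist disjoint necklaces N_ω and N_η representing ω and η respectively such that for every n the n-th bead of N_ω sends an edge to the n-th bead of N_η. -/
variable {V : Type*}

namespace LEhelp
open Relation List

variable {D : V → V → Prop} {S T C C' : Set V} {a b x y z v : V}

abbrev Stp (D : V → V → Prop) (S : Set V) : V → V → Prop := fun x y => y ∈ S ∧ D x y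

theorem rtg_mono (h : S ⊆ T) (hr : Relation.ReflTransGen (Stp D S) a b) :
    Relation.ReflTransGen (Stp D T) a b := by
  induction hr with
  | refl => exact .refl
  | tail _ h2 ih => exact ih.tail ⟨h h2.1, h2.2⟩

theorem reachIn_mono (h : S ⊆ T) (hr : ReachIn D S a b) : ReachIn D T a b :=
  ⟨h hr.1, h hr.2.1, rtg_mono h hr.2.2⟩

theorem reachIn_trans {c : V} (h1 : ReachIn D S a b) (h2 : ReachIn D S b c) :
    ReachIn D S a c :=
  ⟨h1.1, h2.2.1, h1.2.2.trans h2.2.2⟩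

theorem scc_subset (h : IsSCCIn D S C) : C ⊆ S := by
  obtain ⟨a, _, rfl⟩ := h
  exact fun b hb => hb.1.2.1

theorem scc_eq_of_mem (h : IsSCCIn D S C) (hx : x ∈ C) :
    C = {b | ReachIn D S x b ∧ ReachIn D S b x} := by
  obtain ⟨a, ha, rfl⟩ := h
  ext b
  constructor
  · rintro ⟨h1, h2⟩
    exact ⟨reachIn_trans hx.2 h1, reachIn_trans h2 hx.1⟩
  · rintro ⟨h1, h2⟩
    exact ⟨reachIn_trans hx.1 h1, reachIn_trans h2 hx.2⟩

theorem mem_scc_iff (h : IsSCCIn D S C) (hx : x ∈ C) :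
    b ∈ C ↔ ReachIn D S x b ∧ ReachIn D S b x := by
  rw [scc_eq_of_mem h hx]; rfl

theorem scc_eq_of_inter (h : IsSCCIn D S C) (h' : IsSCCIn D S C')
    (hne : (C ∩ C').Nonempty) : C = C' := by
  obtain ⟨x, hx, hx'⟩ := hne
  rw [scc_eq_of_mem h hx, scc_eq_of_mem h' hx']

theorem mem_scc_of_between (h : IsSCCIn D S C) (hx : x ∈ C) (hy : y ∈ C)
    (h1 : Relation.ReflTransGen (Stp D S) x z) (h2 : Relation.ReflTransGen (Stp D S) z y) :
    z ∈ C := by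
  have hzS : z ∈ S := by
    rcases Relation.ReflTransGen.cases_head h1 with rfl | ⟨u, hu, hr⟩
    · exact scc_subset h hx
    · rcases Relation.ReflTransGen.cases_tail hr with rfl | ⟨w, _, hw⟩
      · exact hu.1
      · exact hw.1
  have hyx : ReachIn D S y x := ((mem_scc_iff h hx).mp hy).2
  rw [mem_scc_iff h hx]
  exact ⟨⟨scc_subset h hx, hzS, h1⟩, ⟨hzS, scc_subset h hx, h2.trans hyx.2.2⟩⟩

/-! ### list path lemmas -/

theorem getLast?_append_of_ne {l₁ l₂ : List V} (h : l₂ ≠ []) :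
    (l₁ ++ l₂).getLast? = l₂.getLast? := by
  rw [List.getLast?_append]
  cases l₂ with
  | nil => exact absurd rfl h
  | cons c t => simp [List.getLast?_eq_getLast]

theorem chain_rtg (l : List V) (h : l ≠ []) (hc : l.Chain' D) (hS : ∀ y ∈ l.tail, y ∈ S) :
    Relation.ReflTransGen (Stp D S) (l.head h) (l.getLast h) := by
  induction l with
  | nil => exact absurd rfl h
  | cons a t ih =>
    cases t with
    | nil => exact .refl
    | cons b t' =>
      have hc' := List.isChain_cons_cons.mp hc
      have hb : b ∈ S := hS b (by simp)
      have := ih (by simp) hc'.2 (fun y hy => hS y (by simpa using Or.inr hy))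
      rw [List.getLast_cons (by simp)]
      exact Relation.ReflTransGen.head ⟨hb, hc'.1⟩ this

theorem chain_rtg' {l : List V} (hc : l.Chain' D) (hS : ∀ y ∈ l, y ∈ S)
    (hh : l.head? = some a) (hl : l.getLast? = some b) :
    Relation.ReflTransGen (Stp D S) a b := by
  have hne : l ≠ [] := by rintro rfl; simp at hh
  have h1 : l.head hne = a := by
    have := List.head?_eq_head hne (l := l)
    rw [hh] at this; exact (Option.some_injective _ this.symm)
  have h2 : l.getLast hne = b := by
    have := List.getLast?_eq_getLast hne
    rw [hl] at this; exact (Option.some_injective _ this.symm)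
  have := chain_rtg l hne hc (fun y hy => hS y (List.mem_of_mem_tail hy))
  rwa [h1, h2] at this

theorem exists_first_split (l : List V) (P : V → Prop) (h : ∃ x ∈ l, P x) :
    ∃ l₁ x l₂, l = l₁ ++ x :: l₂ ∧ P x ∧ ∀ y ∈ l₁, ¬ P y := by
  induction l with
  | nil => simp at h
  | cons a t ih =>
    by_cases ha : P a
    · exact ⟨[], a, t, by simp, ha, by simp⟩
    · obtain ⟨x, hx, hPx⟩ := h
      rcases List.mem_cons.mp hx with rfl | hxt
      · exact absurd hPx ha
      · obtain ⟨l₁, x, l₂, rfl, hPx', hnone⟩ := ih ⟨x, hxt, hPx⟩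
        exact ⟨a :: l₁, x, l₂, by simp, hPx', by
          intro y hy
          rcases List.mem_cons.mp hy with rfl | hy'
          · exact ha
          · exact hnone y hy'⟩

theorem exists_last_split (l : List V) (P : V → Prop) (h : ∃ x ∈ l, P x) :
    ∃ l₁ x l₂, l = l₁ ++ x :: l₂ ∧ P x ∧ ∀ y ∈ l₂, ¬ P y := by
  induction l with
  | nil => simp at h
  | cons a t ih =>
    by_cases ht : ∃ x ∈ t, P x
    · obtain ⟨l₁, x, l₂, rfl, hPx', hnone⟩ := ih ht
      exact ⟨a :: l₁, x, l₂, by simp, hPx', hnone⟩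
    · obtain ⟨x, hx, hPx⟩ := h
      rcases List.mem_cons.mp hx with rfl | hxt
      · refine ⟨[], x, t, by simp, hPx, fun y hy hPy => ht ⟨y, hy, hPy⟩⟩
      · exact absurd ⟨x, hxt, hPx⟩ ht

theorem chain_rtg_head_to_mem {l : List V} (hc : l.Chain' D) (hS : ∀ y ∈ l, y ∈ S)
    (hh : l.head? = some a) (hx : x ∈ l) :
    Relation.ReflTransGen (Stp D S) a x := by
  obtain ⟨l₁, l₂, rfl⟩ := List.append_of_mem hx
  refine chain_rtg' (l := l₁ ++ [x]) (hc.infix ⟨[], l₂, by simp⟩) ?_ ?_ (by simp)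
  · intro y hy
    refine hS y ?_
    simp only [List.mem_append, List.mem_cons] at hy ⊢
    tauto
  · rw [← hh]
    cases l₁ with
    | nil => simp
    | cons c t => simp

theorem chain_rtg_mem_to_last {l : List V} (hc : l.Chain' D) (hS : ∀ y ∈ l, y ∈ S)
    (hl : l.getLast? = some b) (hx : x ∈ l) :
    Relation.ReflTransGen (Stp D S) x b := by
  obtain ⟨l₁, l₂, rfl⟩ := List.append_of_mem hx
  refine chain_rtg' (l := x :: l₂) (hc.infix ⟨l₁, [], by simp⟩) ?_ (by simp) ?_
  · intro y hy
    refine hS y ?_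
    simp only [List.mem_append, List.mem_cons] at hy ⊢
    tauto
  · rw [← hl, getLast?_append_of_ne (by simp)]

theorem mem_of_getLast? {l : List V} (h : l.getLast? = some b) : b ∈ l := by
  cases l with
  | nil => simp at h
  | cons c t =>
    have hne : c :: t ≠ [] := by simp
    have := List.getLast?_eq_getLast hne
    rw [h] at this
    have := Option.some_injective _ this.symm
    exact this ▸ List.getLast_mem hne

theorem mem_of_head? {l : List V} (h : l.head? = some a) : a ∈ l := by
  cases l with
  | nil => simp at h
  | cons c t => simp_all

theorem path_subset_scc {l : List V} (hscc : IsSCCIn D S C) (hc : l.Chain' D)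
    (hS : ∀ y ∈ l, y ∈ S) (hh : l.head? = some a) (hl : l.getLast? = some b)
    (ha : a ∈ C) (hb : b ∈ C) : ∀ x ∈ l, x ∈ C := fun x hx =>
  mem_scc_of_between hscc ha hb (chain_rtg_head_to_mem hc hS hh hx)
    (chain_rtg_mem_to_last hc hS hl hx)

theorem exists_nodup_path (h : ReachIn D S a b) :
    ∃ l : List V, l ≠ [] ∧ l.Nodup ∧ l.Chain' D ∧ l.head? = some a ∧ l.getLast? = some b ∧
      ∀ x ∈ l, x ∈ S := by
  obtain ⟨haS, hbS, hr⟩ := h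
  induction hr using Relation.ReflTransGen.head_induction_on with
  | refl => exact ⟨[b], by simp, by simp, List.isChain_singleton b, by simp, by simp, by simp [hbS]⟩
  | head hstep _ ih =>
    rename_i a0 cmid hrtg
    obtain ⟨l, hne, hnd, hc, hhd, hlast, hmem⟩ := ih hstep.1
    clear hrtg
    by_cases hal : a0 ∈ l
    · obtain ⟨l₁, l₂, rfl⟩ := List.append_of_mem hal
      refine ⟨a0 :: l₂, by simp, ?_, ?_, by simp, ?_, ?_⟩
      · exact hnd.sublist (List.suffix_append l₁ (a0 :: l₂)).sublist
      · exact hc.infix ⟨l₁, [], by simp⟩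
      · rw [← hlast, getLast?_append_of_ne (l₂ := a0 :: l₂) (by simp)]
      · intro x hx
        exact hmem x (by
          simp only [List.mem_append, List.mem_cons] at hx ⊢
          tauto)
    · cases l with
      | nil => exact absurd rfl hne
      | cons c t =>
        have hca : c = cmid := by simpa using hhd
        subst hca
        refine ⟨a0 :: c :: t, by simp, ?_, ?_, by simp, ?_, ?_⟩
        · exact List.nodup_cons.mpr ⟨hal, hnd⟩
        · exact List.isChain_cons_cons.mpr ⟨hstep.2, hc⟩
        · rw [← hlast, show a0 :: c :: t = [a0] ++ (c :: t) from rfl,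
            getLast?_append_of_ne (by simp)]
        · intro x hx
          rcases List.mem_cons.mp hx with rfl | hx'
          · exact haS
          · exact hmem x hx'

/-! ### cores -/

def core (D : V → V → Prop) (Ω : Set V) (v : V) : Set V :=
  {x | ReachIn D Ω x v ∧ ReachIn D Ω v x}

theorem core_subset {Ω : Set V} : core D Ω v ⊆ Ω := fun _ h => h.1.1

theorem mem_core_self {Ω : Set V} (hv : v ∈ Ω) : v ∈ core D Ω v :=
  ⟨⟨hv, hv, .refl⟩, ⟨hv, hv, .refl⟩⟩

theorem core_rtg_to {Ω : Set V} (hx : x ∈ core D Ω v) :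
    Relation.ReflTransGen (Stp D (core D Ω v)) x v := by
  obtain ⟨⟨hxΩ, hvΩ, hxv⟩, hvx⟩ := hx
  induction hxv using Relation.ReflTransGen.head_induction_on with
  | refl => exact .refl
  | @head p q hstep hrtg ih =>
    have hvq : Relation.ReflTransGen (Stp D Ω) v q := hvx.2.2.tail ⟨hstep.1, hstep.2⟩
    have hq : q ∈ core D Ω v := ⟨⟨hstep.1, hvΩ, hrtg⟩, ⟨hvΩ, hstep.1, hvq⟩⟩
    exact Relation.ReflTransGen.head ⟨hq, hstep.2⟩ (ih ⟨hvx.1, hstep.1, hvq⟩ hstep.1)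

theorem core_rtg_from {Ω : Set V} (hx : x ∈ core D Ω v) :
    Relation.ReflTransGen (Stp D (core D Ω v)) v x := by
  obtain ⟨⟨hxΩ, hvΩ, hxv⟩, ⟨h1x, h2x, hvx⟩⟩ := hx
  clear hxΩ h1x h2x
  revert hxv
  induction hvx with
  | refl => intro _; exact .refl
  | @tail p q hpre hstep ih =>
    intro hqv
    have hpv : Relation.ReflTransGen (Stp D Ω) p v :=
      Relation.ReflTransGen.head ⟨hstep.1, hstep.2⟩ hqv
    have hq : q ∈ core D Ω v := ⟨⟨hstep.1, hvΩ, hqv⟩, ⟨hvΩ, hstep.1, hpre.tail hstep⟩⟩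
    exact (ih hpv).tail ⟨hq, hstep.2⟩

theorem core_strong {Ω : Set V} (hx : x ∈ core D Ω v) (hy : y ∈ core D Ω v) :
    ReachIn D (core D Ω v) x y :=
  ⟨hx, hy, (core_rtg_to hx).trans (core_rtg_from hy)⟩

theorem subset_core {Ω A : Set V} (hA : A ⊆ Ω)
    (h : ∀ x ∈ A, ReachIn D A x v ∧ ReachIn D A v x) : A ⊆ core D Ω v :=
  fun x hx => ⟨reachIn_mono hA (h x hx).1, reachIn_mono hA (h x hx).2⟩

/-! ### the tail component function -/

section comp

variable {R : ℕ → V}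
variable (hs : ∀ X : Finset V, ∃ C, IsSCCIn D ((↑X : Set V)ᶜ) C ∧ HasTailIn R C)

noncomputable def comp (X : Finset V) : Set V := (hs X).choose

theorem comp_scc (X : Finset V) : IsSCCIn D ((↑X : Set V)ᶜ) (comp hs X) :=
  (hs X).choose_spec.1

theorem comp_tail (X : Finset V) : HasTailIn R (comp hs X) := (hs X).choose_spec.2

theorem comp_not_mem_X {X : Finset V} (hx : x ∈ comp hs X) : x ∉ (↑X : Set V) :=
  scc_subset (comp_scc hs X) hx

theorem comp_unique {X : Finset V} (h1 : IsSCCIn D ((↑X : Set V)ᶜ) C) (h2 : HasTailIn R C) :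
    C = comp hs X := by
  obtain ⟨n1, hn1⟩ := h2
  obtain ⟨n2, hn2⟩ := comp_tail hs X
  exact scc_eq_of_inter h1 (comp_scc hs X)
    ⟨R (max n1 n2), hn1 _ (le_max_left _ _), hn2 _ (le_max_right _ _)⟩

theorem comp_antitone {X Y : Finset V} (hXY : X ⊆ Y) : comp hs Y ⊆ comp hs X := by
  obtain ⟨n1, hn1⟩ := comp_tail hs X
  obtain ⟨n2, hn2⟩ := comp_tail hs Y
  have htX : R (max n1 n2) ∈ comp hs X := hn1 _ (le_max_left _ _)
  have htY : R (max n1 n2) ∈ comp hs Y := hn2 _ (le_max_right _ _)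
  intro zz hz
  have hsub : ((↑Y : Set V)ᶜ) ⊆ ((↑X : Set V)ᶜ) := by
    intro u hu hXu
    exact hu (Finset.coe_subset.mpr hXY hXu)
  have := (mem_scc_iff (comp_scc hs Y) htY).mp hz
  exact (mem_scc_iff (comp_scc hs X) htX).mpr
    ⟨reachIn_mono hsub this.1, reachIn_mono hsub this.2⟩

theorem comp_nonempty (X : Finset V) : (comp hs X).Nonempty := by
  obtain ⟨n1, hn1⟩ := comp_tail hs X
  exact ⟨R n1, hn1 _ le_rfl⟩

end comp

end LEhelp

open LEhelp in
/-- per-side data produced at one stage of the construction. -/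
structure SideOut (D : V → V → Prop) {R : ℕ → V}
    (hs : ∀ X : Finset V, ∃ C, IsSCCIn D ((↑X : Set V)ᶜ) C ∧ HasTailIn R C)
    (ZA ZB : Finset V) (spre : Finset V) (a' : V) (τ' : ℕ) where
  B : Finset V
  pre' : Finset V
  used : Finset V
  fwd : List V
  bwd : List V
  hB_pre : (↑spre : Set V) ⊆ ↑B
  hB_strong : ∀ x ∈ (↑B : Set V), ∀ y ∈ (↑B : Set V), ReachIn D ↑B x y
  hB_subCA : (↑B : Set V) ⊆ comp hs ZA
  hB_disjCB : ∀ x ∈ (↑B : Set V), x ∉ comp hs ZB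
  hB_used : B ⊆ used
  hfwd : IsPathList D fwd
  hbwd : IsPathList D bwd
  hfwd_head : ∀ c, fwd.head? = some c → c ∈ B
  hfwd_last : ∀ c, fwd.getLast? = some c → c ∈ pre'
  hbwd_head : ∀ c, bwd.head? = some c → c ∈ pre'
  hbwd_last : ∀ c, bwd.getLast? = some c → c ∈ B
  hfwdI : ∀ x ∈ fwd.tail.dropLast, x ∈ comp hs ZA ∧ x ∉ comp hs ZB ∧ x ∉ (↑B : Set V)
  hbwdI : ∀ x ∈ bwd.tail.dropLast, x ∈ comp hs ZA ∧ x ∉ comp hs ZB ∧ x ∉ (↑B : Set V)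
  hfb : ∀ x ∈ fwd.tail.dropLast, x ∉ bwd.tail.dropLast
  hfwd_sub : ∀ x ∈ fwd, x ∈ comp hs ZA
  hbwd_sub : ∀ x ∈ bwd, x ∈ comp hs ZA
  hfwd_used : ∀ x ∈ fwd, x ∈ used
  hbwd_used : ∀ x ∈ bwd, x ∈ used
  hpre'_base : R τ' ∈ pre'
  hpre'_a : a' ∈ pre'
  hpre'_sub : (↑pre' : Set V) ⊆ comp hs ZB
  hpre'_used : pre' ⊆ used
  hpre'_strong : ∀ x ∈ (↑pre' : Set V), ∀ y ∈ (↑pre' : Set V), ReachIn D ↑pre' x y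

open LEhelp in
/-- the state of the recursive construction. -/
structure PreState (D : V → V → Prop) {Rω Rη : ℕ → V}
    (hsω : ∀ X : Finset V, ∃ C, IsSCCIn D ((↑X : Set V)ᶜ) C ∧ HasTailIn Rω C)
    (hsη : ∀ X : Finset V, ∃ C, IsSCCIn D ((↑X : Set V)ᶜ) C ∧ HasTailIn Rη C)
    (X0 : Finset V) where
  ZA : Finset V
  ZB : Finset V
  k : ℕ
  hX0 : X0 ⊆ ZA
  hAB : ZA ⊆ ZB
  preω : Finset V
  preη : Finset V
  τω : ℕ
  τη : ℕ
  hτωk : k ≤ τω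
  hτηk : k ≤ τη
  hbaseω : Rω τω ∈ preω
  hbaseη : Rη τη ∈ preη
  hpreω_sub : (↑preω : Set V) ⊆ comp hsω ZA
  hpreη_sub : (↑preη : Set V) ⊆ comp hsη ZA
  hpreω_Z : (↑preω : Set V) ⊆ (↑ZB : Set V)
  hpreη_Z : (↑preη : Set V) ⊆ (↑ZB : Set V)
  hpreω_strong : ∀ x ∈ (↑preω : Set V), ∀ y ∈ (↑preω : Set V), ReachIn D ↑preω x y
  hpreη_strong : ∀ x ∈ (↑preη : Set V), ∀ y ∈ (↑preη : Set V), ReachIn D ↑preη x y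
  hedge : ∃ a ∈ preω, ∃ b ∈ preη, D a b

open LEhelp in
/-- output of one stage. -/
structure StepOut (D : V → V → Prop) {Rω Rη : ℕ → V}
    {hsω : ∀ X : Finset V, ∃ C, IsSCCIn D ((↑X : Set V)ᶜ) C ∧ HasTailIn Rω C}
    {hsη : ∀ X : Finset V, ∃ C, IsSCCIn D ((↑X : Set V)ᶜ) C ∧ HasTailIn Rη C}
    {X0 : Finset V} (s : PreState D hsω hsη X0) where
  t : PreState D hsω hsη X0
  hZA : t.ZA = s.ZB
  hZB : s.ZB ⊆ t.ZB
  hk : t.k = s.k + 1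
  aE : V
  bE : V
  eω : SideOut D hsω s.ZA s.ZB s.preω aE t.τω
  eη : SideOut D hsη s.ZA s.ZB s.preη bE t.τη
  hpreω : t.preω = eω.pre'
  hpreη : t.preη = eη.pre'
  hZused : (↑eω.used : Set V) ∪ ↑eη.used ⊆ (↑t.ZB : Set V)
  hedgeB : ∃ a ∈ eω.B, ∃ b ∈ eη.B, D a b


open LEhelp in
set_option maxHeartbeats 2000000 in
theorem side_step {D : V → V → Prop} {R : ℕ → V}
    (hs : ∀ X : Finset V, ∃ C, IsSCCIn D ((↑X : Set V)ᶜ) C ∧ HasTailIn R C)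
    {ZA ZB : Finset V} (hAB : ZA ⊆ ZB)
    {spre : Finset V} {τ : ℕ} (hbase : R τ ∈ spre)
    (hpre_sub : (↑spre : Set V) ⊆ comp hs ZA)
    (hpre_Z : (↑spre : Set V) ⊆ (↑ZB : Set V))
    (hpre_strong : ∀ x ∈ (↑spre : Set V), ∀ y ∈ (↑spre : Set V), ReachIn D ↑spre x y)
    {a' : V} (ha' : a' ∈ comp hs ZB)
    {τ' : ℕ} (hτ' : R τ' ∈ comp hs ZB) :
    Nonempty (SideOut D hs ZA ZB spre a' τ') := by
  classical
  set CA := comp hs ZA with hCAdef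
  set CB := comp hs ZB with hCBdef
  have hBA : CB ⊆ CA := comp_antitone hs hAB
  set base := R τ with hbdef
  have hbaseS : (base : V) ∈ (↑spre : Set V) := by exact_mod_cast hbase
  have hbaseCA : base ∈ CA := hpre_sub hbaseS
  set base' := R τ' with hb'def
  have hb'CB : base' ∈ CB := hτ'
  have hb'CA : base' ∈ CA := hBA hb'CB
  have hsccA := comp_scc hs ZA
  have hsccB := comp_scc hs ZB
  have hreach1 : ReachIn D ((↑ZA : Set V)ᶜ) base base' :=
    ((mem_scc_iff hsccA hbaseCA).mp hb'CA).1
  have hreach2 : ReachIn D ((↑ZA : Set V)ᶜ) base' base :=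
    ((mem_scc_iff hsccA hbaseCA).mp hb'CA).2
  obtain ⟨W', hW'ne, hW'nd, hW'c, hW'h, hW'l, hW'S⟩ := exists_nodup_path hreach1
  obtain ⟨W, hWne, hWnd, hWc, hWh, hWl, hWS⟩ := exists_nodup_path hreach2
  have hW'CA : ∀ x ∈ W', x ∈ CA :=
    path_subset_scc hsccA hW'c hW'S hW'h hW'l hbaseCA hb'CA
  have hWCA : ∀ x ∈ W, x ∈ CA :=
    path_subset_scc hsccA hWc hWS hWh hWl hb'CA hbaseCA
  have hbase_not : base ∉ CB := fun hmem => comp_not_mem_X hs hmem (hpre_Z hbaseS)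
  -- split W' at the first vertex in CB
  obtain ⟨P1, h', P2, hW'eq, hh'CB, hP1not⟩ :=
    exists_first_split W' (· ∈ CB) ⟨base', mem_of_getLast? hW'l, hb'CB⟩
  have hP1ne : P1 ≠ [] := by
    rintro rfl
    rw [hW'eq] at hW'h
    simp only [List.nil_append, List.head?_cons, Option.some.injEq] at hW'h
    exact hbase_not (hW'h ▸ hh'CB)
  have hP1h : P1.head? = some base := by
    rw [hW'eq, List.head?_append] at hW'h
    cases hp : P1.head? with
    | none => exact absurd (List.head?_eq_none_iff.mp hp) hP1ne
    | some u => rw [hp] at hW'h; simpa using hW'h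
  -- split W at the last vertex in CB
  obtain ⟨Q1, h, Q2, hWeq, hhCB, hQ2not⟩ :=
    exists_last_split W (· ∈ CB) ⟨base', mem_of_head? hWh, hb'CB⟩
  have hQ2ne : Q2 ≠ [] := by
    rintro rfl
    rw [hWeq, getLast?_append_of_ne (by simp)] at hWl
    simp only [List.getLast?_singleton, Option.some.injEq] at hWl
    exact hbase_not (hWl ▸ hhCB)
  have hQ2l : Q2.getLast? = some base := by
    rw [hWeq, getLast?_append_of_ne (by simp),
      show (h :: Q2) = [h] ++ Q2 from rfl, getLast?_append_of_ne hQ2ne] at hWl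
    exact hWl
  -- the sets
  set Ωf : Finset V := spre ∪ P1.toFinset ∪ Q2.toFinset with hΩdef
  have hpreΩ : (↑spre : Set V) ⊆ (↑Ωf : Set V) := by
    intro x hx
    simp only [hΩdef, Finset.coe_union, Set.mem_union]
    exact Or.inl (Or.inl hx)
  have hP1Ω : ∀ x ∈ P1, x ∈ (↑Ωf : Set V) := by
    intro x hx
    simp only [hΩdef, Finset.coe_union, Set.mem_union, Finset.mem_coe, List.mem_toFinset]
    exact Or.inl (Or.inr hx)
  have hQ2Ω : ∀ x ∈ Q2, x ∈ (↑Ωf : Set V) := by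
    intro x hx
    simp only [hΩdef, Finset.coe_union, Set.mem_union, Finset.mem_coe, List.mem_toFinset]
    exact Or.inr hx
  have hbaseΩ : base ∈ (↑Ωf : Set V) := hpreΩ hbaseS
  set Bs : Set V := core D ↑Ωf base with hBsdef
  have hBfin : Bs.Finite := Set.Finite.subset (Ωf.finite_toSet) core_subset
  set B : Finset V := hBfin.toFinset with hBdef
  have hBcoe : (↑B : Set V) = Bs := hBfin.coe_toFinset
  have hpreB : (↑spre : Set V) ⊆ Bs :=
    subset_core hpreΩ (fun x hx => ⟨hpre_strong x hx base hbaseS, hpre_strong base hbaseS x hx⟩)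
  have hbaseB : base ∈ Bs := hpreB hbaseS
  have hBsΩ : Bs ⊆ (↑Ωf : Set V) := core_subset
  have hΩCA : (↑Ωf : Set V) ⊆ CA := by
    intro x hx
    simp only [hΩdef, Finset.coe_union, Set.mem_union, Finset.mem_coe, List.coe_toFinset,
      Set.mem_setOf_eq] at hx
    rcases hx with (hx | hx) | hx
    · exact hpre_sub hx
    · exact hW'CA x (by rw [hW'eq]; simp [hx])
    · exact hWCA x (by rw [hWeq]; simp [hx])
  have hBCA : Bs ⊆ CA := fun x hx => hΩCA (hBsΩ hx)
  have hBnotCB : ∀ x ∈ Bs, x ∉ CB := by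
    intro x hx hxCB
    have hxΩ := hBsΩ hx
    simp only [hΩdef, Finset.coe_union, Set.mem_union, Finset.mem_coe, List.coe_toFinset,
      Set.mem_setOf_eq] at hxΩ
    rcases hxΩ with (hx1 | hx1) | hx1
    · exact comp_not_mem_X hs hxCB (hpre_Z hx1)
    · exact hP1not x hx1 hxCB
    · exact hQ2not x hx1 hxCB
  -- trim the forward path
  obtain ⟨P1a, ℓ', P1b, hP1eq, hℓ'B, hP1bnot⟩ :=
    exists_last_split P1 (· ∈ Bs) ⟨base, mem_of_head? hP1h, hbaseB⟩
  -- trim the backward path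
  obtain ⟨Q2a, ℓ, Q2b, hQ2eq, hℓB, hQ2anot⟩ :=
    exists_first_split Q2 (· ∈ Bs) ⟨base, mem_of_getLast? hQ2l, hbaseB⟩
  set fwd : List V := (ℓ' :: P1b) ++ [h'] with hfwddef
  set bwd : List V := (h :: Q2a) ++ [ℓ] with hbwddef
  have hfwdInfix : fwd <:+: W' := by
    refine ⟨P1a, P2, ?_⟩
    rw [hW'eq, hP1eq, hfwddef]
    simp
  have hbwdInfix : bwd <:+: W := by
    refine ⟨Q1, Q2b, ?_⟩
    rw [hWeq, hQ2eq, hbwddef]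
    simp
  have hP1chain : P1.Chain' D := hW'c.infix ⟨[], h' :: P2, by rw [hW'eq]; simp⟩
  have hQ2chain : Q2.Chain' D := hWc.infix ⟨Q1 ++ [h], [], by rw [hWeq]; simp⟩
  -- mutual disjointness of the inner parts
  have hinnerB : ∀ x, x ∈ P1b → x ∈ Q2a → False := by
    intro x hx1 hx2
    have hxP1 : x ∈ P1 := by rw [hP1eq]; simp [hx1]
    have hxQ2 : x ∈ Q2 := by rw [hQ2eq]; simp [hx2]
    have hto : Relation.ReflTransGen (Stp D ↑Ωf) x base :=
      chain_rtg_mem_to_last hQ2chain hQ2Ω hQ2l hxQ2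
    have hfrom : Relation.ReflTransGen (Stp D ↑Ωf) base x :=
      chain_rtg_head_to_mem hP1chain hP1Ω hP1h hxP1
    have hxB : x ∈ Bs := ⟨⟨hP1Ω x hxP1, hbaseΩ, hto⟩, ⟨hbaseΩ, hP1Ω x hxP1, hfrom⟩⟩
    exact hP1bnot x hx1 hxB
  -- the new pre-bead
  have hhCB' : h ∈ CB := hhCB
  have hh'CB' : h' ∈ CB := hh'CB
  have hr_a1 : ReachIn D ((↑ZB : Set V)ᶜ) base' a' := ((mem_scc_iff hsccB hb'CB).mp ha').1
  have hr_a2 : ReachIn D ((↑ZB : Set V)ᶜ) a' base' := ((mem_scc_iff hsccB hb'CB).mp ha').2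
  have hr_h1 : ReachIn D ((↑ZB : Set V)ᶜ) base' h := ((mem_scc_iff hsccB hb'CB).mp hhCB').1
  have hr_h2 : ReachIn D ((↑ZB : Set V)ᶜ) h base' := ((mem_scc_iff hsccB hb'CB).mp hhCB').2
  have hr_g1 : ReachIn D ((↑ZB : Set V)ᶜ) base' h' := ((mem_scc_iff hsccB hb'CB).mp hh'CB').1
  have hr_g2 : ReachIn D ((↑ZB : Set V)ᶜ) h' base' := ((mem_scc_iff hsccB hb'CB).mp hh'CB').2
  obtain ⟨la1, _, _, la1c, la1h, la1l, la1S⟩ := exists_nodup_path hr_a1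
  obtain ⟨la2, _, _, la2c, la2h, la2l, la2S⟩ := exists_nodup_path hr_a2
  obtain ⟨lh1, _, _, lh1c, lh1h, lh1l, lh1S⟩ := exists_nodup_path hr_h1
  obtain ⟨lh2, _, _, lh2c, lh2h, lh2l, lh2S⟩ := exists_nodup_path hr_h2
  obtain ⟨lg1, _, _, lg1c, lg1h, lg1l, lg1S⟩ := exists_nodup_path hr_g1
  obtain ⟨lg2, _, _, lg2c, lg2h, lg2l, lg2S⟩ := exists_nodup_path hr_g2
  set Θf : Finset V := insert base' (la1.toFinset ∪ la2.toFinset ∪ lh1.toFinset ∪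
    lh2.toFinset ∪ lg1.toFinset ∪ lg2.toFinset) with hΘdef
  have hb'Θ : base' ∈ (↑Θf : Set V) := by simp [hΘdef]
  have hΘCB : (↑Θf : Set V) ⊆ CB := by
    intro x hx
    simp only [hΘdef, Finset.coe_insert, Set.mem_insert_iff, Finset.coe_union,
      Set.mem_union, List.coe_toFinset, Set.mem_setOf_eq, Finset.mem_coe] at hx
    rcases hx with rfl | ((((hx | hx) | hx) | hx) | hx) | hx
    · exact hb'CB
    · exact path_subset_scc hsccB la1c la1S la1h la1l hb'CB ha' x hx
    · exact path_subset_scc hsccB la2c la2S la2h la2l ha' hb'CB x hx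
    · exact path_subset_scc hsccB lh1c lh1S lh1h lh1l hb'CB hhCB' x hx
    · exact path_subset_scc hsccB lh2c lh2S lh2h lh2l hhCB' hb'CB x hx
    · exact path_subset_scc hsccB lg1c lg1S lg1h lg1l hb'CB hh'CB' x hx
    · exact path_subset_scc hsccB lg2c lg2S lg2h lg2l hh'CB' hb'CB x hx
  set Ps : Set V := core D ↑Θf base' with hPsdef
  have hPfin : Ps.Finite := Set.Finite.subset (Θf.finite_toSet) core_subset
  set preF : Finset V := hPfin.toFinset with hpreFdef
  have hpreFcoe : (↑preF : Set V) = Ps := hPfin.coe_toFinset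
  have hmemgen : ∀ x : V, (x ∈ la1 ∨ x ∈ la2 ∨ x ∈ lh1 ∨ x ∈ lh2 ∨ x ∈ lg1 ∨ x ∈ lg2) →
      x ∈ (↑Θf : Set V) := by
    intro x hx
    simp only [hΘdef, Finset.coe_insert, Set.mem_insert_iff, Finset.coe_union,
      Set.mem_union, List.coe_toFinset, Set.mem_setOf_eq, Finset.mem_coe]
    tauto
  have hmemΘ : ∀ x ∈ la1, x ∈ (↑Θf : Set V) := fun x hx => hmemgen x (by tauto)
  have hmemΘ2 : ∀ x ∈ la2, x ∈ (↑Θf : Set V) := fun x hx => hmemgen x (by tauto)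
  have hmemΘ3 : ∀ x ∈ lh1, x ∈ (↑Θf : Set V) := fun x hx => hmemgen x (by tauto)
  have hmemΘ4 : ∀ x ∈ lh2, x ∈ (↑Θf : Set V) := fun x hx => hmemgen x (by tauto)
  have hmemΘ5 : ∀ x ∈ lg1, x ∈ (↑Θf : Set V) := fun x hx => hmemgen x (by tauto)
  have hmemΘ6 : ∀ x ∈ lg2, x ∈ (↑Θf : Set V) := fun x hx => hmemgen x (by tauto)
  have hb'P : base' ∈ Ps := mem_core_self hb'Θ
  have haP : a' ∈ Ps := by
    refine ⟨⟨hmemΘ _ (mem_of_getLast? la1l), hb'Θ, ?_⟩, hb'Θ, hmemΘ _ (mem_of_getLast? la1l), ?_⟩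
    · exact chain_rtg' la2c hmemΘ2 la2h la2l
    · exact chain_rtg' la1c hmemΘ la1h la1l
  have hhP : h ∈ Ps := by
    refine ⟨⟨hmemΘ3 _ (mem_of_getLast? lh1l), hb'Θ, ?_⟩, hb'Θ, hmemΘ3 _ (mem_of_getLast? lh1l), ?_⟩
    · exact chain_rtg' lh2c hmemΘ4 lh2h lh2l
    · exact chain_rtg' lh1c hmemΘ3 lh1h lh1l
  have hh'P : h' ∈ Ps := by
    refine ⟨⟨hmemΘ5 _ (mem_of_getLast? lg1l), hb'Θ, ?_⟩, hb'Θ, hmemΘ5 _ (mem_of_getLast? lg1l), ?_⟩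
    · exact chain_rtg' lg2c hmemΘ6 lg2h lg2l
    · exact chain_rtg' lg1c hmemΘ5 lg1h lg1l
  set used : Finset V := Ωf ∪ Θf ∪ W'.toFinset ∪ W.toFinset with huseddef
  have hfwd_tail : fwd.tail.dropLast = P1b := by
    rw [hfwddef]
    simp only [List.cons_append, List.tail_cons]
    exact List.dropLast_concat
  have hbwd_tail : bwd.tail.dropLast = Q2a := by
    rw [hbwddef]
    simp only [List.cons_append, List.tail_cons]
    exact List.dropLast_concat
  have hP1bP1 : ∀ x ∈ P1b, x ∈ P1 := by
    intro x hx; rw [hP1eq]; simp [hx]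
  have hQ2aQ2 : ∀ x ∈ Q2a, x ∈ Q2 := by
    intro x hx; rw [hQ2eq]; simp [hx]
  have hfwdW' : ∀ x ∈ fwd, x ∈ W' := fun x hx => hfwdInfix.sublist.subset hx
  have hbwdW : ∀ x ∈ bwd, x ∈ W := fun x hx => hbwdInfix.sublist.subset hx
  have hΩused : Ωf ⊆ used := by
    rw [huseddef]
    exact fun x hx => Finset.mem_union_left _ (Finset.mem_union_left _ (Finset.mem_union_left _ hx))
  have hΘused : Θf ⊆ used := by
    rw [huseddef]
    exact fun x hx => Finset.mem_union_left _ (Finset.mem_union_left _ (Finset.mem_union_right _ hx))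
  have hW'used : ∀ x ∈ W', x ∈ used := by
    intro x hx
    rw [huseddef]
    exact Finset.mem_union_left _ (Finset.mem_union_right _ (List.mem_toFinset.mpr hx))
  have hWused : ∀ x ∈ W, x ∈ used := by
    intro x hx
    rw [huseddef]
    exact Finset.mem_union_right _ (List.mem_toFinset.mpr hx)
  refine ⟨⟨B, preF, used, fwd, bwd, ?_, ?_, ?_, ?_, ?_, ?_, ?_, ?_, ?_, ?_, ?_, ?_, ?_, ?_,
    ?_, ?_, ?_, ?_, ?_, ?_, ?_, ?_, ?_⟩⟩
  · -- hB_pre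
    rw [hBcoe]; exact hpreB
  · -- hB_strong
    rw [hBcoe]; exact fun x hx y hy => core_strong hx hy
  · -- hB_subCA
    rw [hBcoe, ← hCAdef]; exact hBCA
  · -- hB_disjCB
    rw [hBcoe, ← hCBdef]; exact hBnotCB
  · -- hB_used
    intro x hx
    have hx' : x ∈ Bs := by rw [← hBcoe]; exact_mod_cast hx
    exact hΩused (by exact_mod_cast hBsΩ hx')
  · -- hfwd
    exact ⟨by simp [hfwddef], hW'nd.sublist hfwdInfix.sublist, hW'c.infix hfwdInfix⟩
  · -- hbwd
    exact ⟨by simp [hbwddef], hWnd.sublist hbwdInfix.sublist, hWc.infix hbwdInfix⟩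
  · -- hfwd_head
    intro cc hcc
    rw [hfwddef] at hcc
    simp only [List.cons_append, List.head?_cons, Option.some.injEq] at hcc
    subst hcc
    rw [← Finset.mem_coe, hBcoe]
    exact hℓ'B
  · -- hfwd_last
    intro cc hcc
    rw [hfwddef, List.getLast?_concat] at hcc
    simp only [Option.some.injEq] at hcc
    subst hcc
    rw [← Finset.mem_coe, hpreFcoe]
    exact hh'P
  · -- hbwd_head
    intro cc hcc
    rw [hbwddef] at hcc
    simp only [List.cons_append, List.head?_cons, Option.some.injEq] at hcc
    subst hcc
    rw [← Finset.mem_coe, hpreFcoe]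
    exact hhP
  · -- hbwd_last
    intro cc hcc
    rw [hbwddef, List.getLast?_concat] at hcc
    simp only [Option.some.injEq] at hcc
    subst hcc
    rw [← Finset.mem_coe, hBcoe]
    exact hℓB
  · -- hfwdI
    intro x hx
    rw [hfwd_tail] at hx
    have hxP1 : x ∈ P1 := hP1bP1 x hx
    refine ⟨?_, ?_, ?_⟩
    · rw [← hCAdef]; exact hW'CA x (by rw [hW'eq]; simp [hxP1])
    · rw [← hCBdef]; exact hP1not x hxP1
    · rw [hBcoe]; exact hP1bnot x hx
  · -- hbwdI
    intro x hx
    rw [hbwd_tail] at hx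
    have hxQ2 : x ∈ Q2 := hQ2aQ2 x hx
    refine ⟨?_, ?_, ?_⟩
    · rw [← hCAdef]; exact hWCA x (by rw [hWeq]; simp [hxQ2])
    · rw [← hCBdef]; exact hQ2not x hxQ2
    · rw [hBcoe]; exact hQ2anot x hx
  · -- hfb
    intro x hx hx2
    rw [hfwd_tail] at hx
    rw [hbwd_tail] at hx2
    exact hinnerB x hx hx2
  · -- hfwd_sub
    intro x hx
    rw [← hCAdef]
    exact hW'CA x (hfwdW' x hx)
  · -- hbwd_sub
    intro x hx
    rw [← hCAdef]
    exact hWCA x (hbwdW x hx)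
  · -- hfwd_used
    intro x hx
    exact hW'used x (hfwdW' x hx)
  · -- hbwd_used
    intro x hx
    exact hWused x (hbwdW x hx)
  · -- hpre'_base
    rw [← Finset.mem_coe, hpreFcoe, ← hb'def]
    exact hb'P
  · -- hpre'_a
    rw [← Finset.mem_coe, hpreFcoe]
    exact haP
  · -- hpre'_sub
    rw [hpreFcoe, ← hCBdef]
    exact fun x hx => hΘCB (core_subset hx)
  · -- hpre'_used
    intro x hx
    have hx' : x ∈ Ps := by rw [← hpreFcoe]; exact_mod_cast hx
    exact hΘused (by exact_mod_cast core_subset hx')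
  · -- hpre'_strong
    rw [hpreFcoe]
    exact fun x hx y hy => core_strong hx hy


open LEhelp in
theorem step_ex {D : V → V → Prop} {Rω Rη : ℕ → V}
    {hsω : ∀ X : Finset V, ∃ C, IsSCCIn D ((↑X : Set V)ᶜ) C ∧ HasTailIn Rω C}
    {hsη : ∀ X : Finset V, ∃ C, IsSCCIn D ((↑X : Set V)ᶜ) C ∧ HasTailIn Rη C}
    {X0 : Finset V}
    (hLim : LimitEdgeEE D Rω Rη)
    (hX0s : ∀ C : Set V, ¬ (IsSCCIn D ((↑X0 : Set V)ᶜ) C ∧ HasTailIn Rω C ∧ HasTailIn Rη C))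
    (s : PreState D hsω hsη X0) : Nonempty (StepOut D s) := by
  classical
  have hX0B : X0 ⊆ s.ZB := s.hX0.trans s.hAB
  have hcompne : comp hsω s.ZB ≠ comp hsη s.ZB := by
    intro heq
    have h1 : comp hsω s.ZB ⊆ comp hsω X0 := comp_antitone hsω hX0B
    have h2 : comp hsη s.ZB ⊆ comp hsη X0 := comp_antitone hsη hX0B
    obtain ⟨x, hx⟩ := comp_nonempty hsω s.ZB
    have heq0 : comp hsω X0 = comp hsη X0 :=
      scc_eq_of_inter (comp_scc _ _) (comp_scc _ _) ⟨x, h1 hx, h2 (heq ▸ hx)⟩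
    exact hX0s (comp hsω X0)
      ⟨comp_scc _ _, comp_tail _ _, heq0 ▸ comp_tail hsη X0⟩
  obtain ⟨aE, haE, bE, hbE, hab⟩ := hLim s.ZB _ _ (comp_scc hsω s.ZB) (comp_tail hsω s.ZB)
    (comp_scc hsη s.ZB) (comp_tail hsη s.ZB) hcompne
  obtain ⟨nω, hnω⟩ := comp_tail hsω s.ZB
  obtain ⟨nη, hnη⟩ := comp_tail hsη s.ZB
  set τω' := max nω (s.k + 1) with hτωdef
  set τη' := max nη (s.k + 1) with hτηdef
  have hτω' : Rω τω' ∈ comp hsω s.ZB := hnω _ (le_max_left _ _)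
  have hτη' : Rη τη' ∈ comp hsη s.ZB := hnη _ (le_max_left _ _) 
  obtain ⟨eω⟩ := side_step hsω s.hAB s.hbaseω s.hpreω_sub s.hpreω_Z s.hpreω_strong haE hτω'
  obtain ⟨eη⟩ := side_step hsη s.hAB s.hbaseη s.hpreη_sub s.hpreη_Z s.hpreη_strong hbE hτη'
  refine ⟨⟨⟨s.ZB, s.ZB ∪ eω.used ∪ eη.used, s.k + 1, hX0B,
    (Finset.subset_union_left).trans Finset.subset_union_left,
    eω.pre', eη.pre', τω', τη', le_max_right _ _, le_max_right _ _,
    eω.hpre'_base, eη.hpre'_base, eω.hpre'_sub, eη.hpre'_sub, ?_, ?_,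
    eω.hpre'_strong, eη.hpre'_strong,
    ⟨aE, by exact_mod_cast eω.hpre'_a, bE, by exact_mod_cast eη.hpre'_a, hab⟩⟩,
    rfl, (Finset.subset_union_left).trans Finset.subset_union_left, rfl,
    aE, bE, eω, eη, rfl, rfl, ?_, ?_⟩⟩
  · intro x hx
    have : x ∈ eω.used := eω.hpre'_used (by exact_mod_cast hx)
    simp only [Finset.coe_union, Set.mem_union, Finset.mem_coe]
    exact Or.inl (Or.inr this)
  · intro x hx
    have : x ∈ eη.used := eη.hpre'_used (by exact_mod_cast hx)
    simp only [Finset.coe_union, Set.mem_union, Finset.mem_coe]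
    exact Or.inr this
  · intro x hx
    simp only [Set.mem_union, Finset.mem_coe] at hx
    simp only [Finset.coe_union, Set.mem_union, Finset.mem_coe]
    tauto
  · obtain ⟨a0, ha0, b0, hb0, hD0⟩ := s.hedge
    exact ⟨a0, by
        have := eω.hB_pre (by exact_mod_cast ha0)
        exact_mod_cast this,
      b0, by
        have := eη.hB_pre (by exact_mod_cast hb0)
        exact_mod_cast this, hD0⟩


open LEhelp in
theorem mk_pre {D : V → V → Prop} {R : ℕ → V}
    (hs : ∀ X : Finset V, ∃ C, IsSCCIn D ((↑X : Set V)ᶜ) C ∧ HasTailIn R C)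
    (X : Finset V) {a' : V} (ha' : a' ∈ comp hs X) {τ' : ℕ} (hτ' : R τ' ∈ comp hs X) :
    ∃ pre : Finset V, R τ' ∈ pre ∧ a' ∈ pre ∧ ((↑pre : Set V) ⊆ comp hs X) ∧
      ∀ x ∈ (↑pre : Set V), ∀ y ∈ (↑pre : Set V), ReachIn D ↑pre x y := by
  classical
  have hscc := comp_scc hs X
  have hr1 : ReachIn D ((↑X : Set V)ᶜ) (R τ') a' := ((mem_scc_iff hscc hτ').mp ha').1
  have hr2 : ReachIn D ((↑X : Set V)ᶜ) a' (R τ') := ((mem_scc_iff hscc hτ').mp ha').2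
  obtain ⟨la1, _, _, la1c, la1h, la1l, la1S⟩ := exists_nodup_path hr1
  obtain ⟨la2, _, _, la2c, la2h, la2l, la2S⟩ := exists_nodup_path hr2
  set Θf : Finset V := insert (R τ') (la1.toFinset ∪ la2.toFinset) with hΘdef
  have hbΘ : R τ' ∈ (↑Θf : Set V) := by simp [hΘdef]
  have hmem1 : ∀ x ∈ la1, x ∈ (↑Θf : Set V) := by
    intro x hx
    simp only [hΘdef, Finset.coe_insert, Set.mem_insert_iff, Finset.coe_union, Set.mem_union,
      List.coe_toFinset, Set.mem_setOf_eq, Finset.mem_coe]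
    tauto
  have hmem2 : ∀ x ∈ la2, x ∈ (↑Θf : Set V) := by
    intro x hx
    simp only [hΘdef, Finset.coe_insert, Set.mem_insert_iff, Finset.coe_union, Set.mem_union,
      List.coe_toFinset, Set.mem_setOf_eq, Finset.mem_coe]
    tauto
  have hΘC : (↑Θf : Set V) ⊆ comp hs X := by
    intro x hx
    simp only [hΘdef, Finset.coe_insert, Set.mem_insert_iff, Finset.coe_union, Set.mem_union,
      List.coe_toFinset, Set.mem_setOf_eq, Finset.mem_coe] at hx
    rcases hx with rfl | (hx | hx)
    · exact hτ'
    · exact path_subset_scc hscc la1c la1S la1h la1l hτ' ha' x hx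
    · exact path_subset_scc hscc la2c la2S la2h la2l ha' hτ' x hx
  set Ps : Set V := core D ↑Θf (R τ') with hPsdef
  have hPfin : Ps.Finite := Set.Finite.subset (Θf.finite_toSet) core_subset
  refine ⟨hPfin.toFinset, ?_, ?_, ?_, ?_⟩
  · rw [← Finset.mem_coe, hPfin.coe_toFinset]
    exact mem_core_self hbΘ
  · rw [← Finset.mem_coe, hPfin.coe_toFinset]
    exact ⟨⟨hmem1 _ (mem_of_getLast? la1l), hbΘ, chain_rtg' la2c hmem2 la2h la2l⟩,
      hbΘ, hmem1 _ (mem_of_getLast? la1l), chain_rtg' la1c hmem1 la1h la1l⟩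
  · rw [hPfin.coe_toFinset]
    exact fun x hx => hΘC (core_subset hx)
  · rw [hPfin.coe_toFinset]
    exact fun x hx y hy => core_strong hx hy

open LEhelp in
theorem init_ex {D : V → V → Prop} {Rω Rη : ℕ → V}
    {hsω : ∀ X : Finset V, ∃ C, IsSCCIn D ((↑X : Set V)ᶜ) C ∧ HasTailIn Rω C}
    {hsη : ∀ X : Finset V, ∃ C, IsSCCIn D ((↑X : Set V)ᶜ) C ∧ HasTailIn Rη C}
    {X0 : Finset V}
    (hLim : LimitEdgeEE D Rω Rη)
    (hX0s : ∀ C : Set V, ¬ (IsSCCIn D ((↑X0 : Set V)ᶜ) C ∧ HasTailIn Rω C ∧ HasTailIn Rη C)) :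
    Nonempty (PreState D hsω hsη X0) := by
  classical
  have hcompne : comp hsω X0 ≠ comp hsη X0 := by
    intro heq
    exact hX0s (comp hsω X0) ⟨comp_scc _ _, comp_tail _ _, heq ▸ comp_tail hsη X0⟩
  obtain ⟨aE, haE, bE, hbE, hab⟩ := hLim X0 _ _ (comp_scc hsω X0) (comp_tail hsω X0)
    (comp_scc hsη X0) (comp_tail hsη X0) hcompne
  obtain ⟨nω, hnω⟩ := comp_tail hsω X0
  obtain ⟨nη, hnη⟩ := comp_tail hsη X0
  obtain ⟨preω, hb1, ha1, hsub1, hstr1⟩ := mk_pre hsω X0 haE (hnω nω le_rfl)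
  obtain ⟨preη, hb2, ha2, hsub2, hstr2⟩ := mk_pre hsη X0 hbE (hnη nη le_rfl)
  refine ⟨⟨X0, X0 ∪ preω ∪ preη, 0, le_refl _, 
    (Finset.subset_union_left).trans Finset.subset_union_left,
    preω, preη, nω, nη, Nat.zero_le _, Nat.zero_le _, hb1, hb2, hsub1, hsub2, ?_, ?_,
    hstr1, hstr2, ⟨aE, ha1, bE, ha2, hab⟩⟩⟩
  · intro x hx
    simp only [Finset.coe_union, Set.mem_union, Finset.mem_coe]
    exact Or.inl (Or.inr (by exact_mod_cast hx))
  · intro x hx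
    simp only [Finset.coe_union, Set.mem_union, Finset.mem_coe]
    exact Or.inr (by exact_mod_cast hx)


open LEhelp in
set_option maxHeartbeats 1000000 in
theorem necklace_assemble {D : V → V → Prop} {R : ℕ → V}
    (hs : ∀ X : Finset V, ∃ C, IsSCCIn D ((↑X : Set V)ᶜ) C ∧ HasTailIn R C)
    (ZA ZB : ℕ → Finset V)
    (hAB : ∀ n, ZA n ⊆ ZB n)
    (hsucc : ∀ n, ZA (n + 1) = ZB n)
    (B : ℕ → Finset V) (fwd bwd : ℕ → List V)
    (τ : ℕ → ℕ) (hτ : ∀ n, n ≤ τ n) (hbase : ∀ n, R (τ n) ∈ B n)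
    (hB_strong : ∀ n, ∀ x ∈ (↑(B n) : Set V), ∀ y ∈ (↑(B n) : Set V), ReachIn D ↑(B n) x y)
    (hB_subCA : ∀ n, (↑(B n) : Set V) ⊆ comp hs (ZA n))
    (hB_disjCB : ∀ n, ∀ x ∈ (↑(B n) : Set V), x ∉ comp hs (ZB n))
    (hfwd : ∀ n, IsPathList D (fwd n)) (hbwd : ∀ n, IsPathList D (bwd n))
    (hfwd_head : ∀ n c, (fwd n).head? = some c → c ∈ B n)
    (hfwd_last : ∀ n c, (fwd n).getLast? = some c → c ∈ B (n + 1))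
    (hbwd_head : ∀ n c, (bwd n).head? = some c → c ∈ B (n + 1))
    (hbwd_last : ∀ n c, (bwd n).getLast? = some c → c ∈ B n)
    (hfwdI : ∀ n, ∀ x ∈ (fwd n).tail.dropLast,
      x ∈ comp hs (ZA n) ∧ x ∉ comp hs (ZB n) ∧ x ∉ (↑(B n) : Set V))
    (hbwdI : ∀ n, ∀ x ∈ (bwd n).tail.dropLast,
      x ∈ comp hs (ZA n) ∧ x ∉ comp hs (ZB n) ∧ x ∉ (↑(B n) : Set V))
    (hfb : ∀ n, ∀ x ∈ (fwd n).tail.dropLast, x ∉ (bwd n).tail.dropLast)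
    (hfwd_sub : ∀ n, ∀ x ∈ fwd n, x ∈ comp hs (ZA n))
    (hbwd_sub : ∀ n, ∀ x ∈ bwd n, x ∈ comp hs (ZA n)) :
    ∃ N : Necklace D, (∀ n, N.bead n = (↑(B n) : Set V)) ∧ NecklaceRepresents N R ∧
      N.verts ⊆ comp hs (ZA 0) := by
  classical
  have hZAmono : ∀ m n, m ≤ n → ZA m ⊆ ZA n := by
    intro m n hmn
    induction n with
    | zero => simpa [Nat.le_zero.mp hmn] using Finset.Subset.refl _
    | succ k ih =>
      rcases Nat.lt_or_ge m (k+1) with hlt | hge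
      · exact (ih (Nat.lt_succ_iff.mp hlt)).trans (by rw [hsucc k]; exact hAB k)
      · have : m = k + 1 := le_antisymm hmn hge
        subst this; exact Finset.Subset.refl _
  have hZBA : ∀ m n, m < n → ZB m ⊆ ZA n := by
    intro m n hmn
    rw [← hsucc m]
    exact hZAmono (m+1) n hmn
  have hCBA : ∀ m n, m < n → comp hs (ZA n) ⊆ comp hs (ZB m) := by
    intro m n hmn
    exact comp_antitone hs (hZBA m n hmn)
  have hdisjB : ∀ m n, m < n → ∀ x, x ∈ (↑(B n) : Set V) → x ∉ (↑(B m) : Set V) := by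
    intro m n hmn x hxn hxm
    exact hB_disjCB m x hxm (hCBA m n hmn (hB_subCA n hxn))
  have hInotB : ∀ n m, ∀ x ∈ (fwd n).tail.dropLast, x ∉ (↑(B m) : Set V) := by
    intro n m x hx hxm
    obtain ⟨hx1, hx2, hx3⟩ := hfwdI n x hx
    rcases lt_trichotomy m n with hlt | rfl | hlt
    · exact hB_disjCB m x hxm (hCBA m n hlt hx1)
    · exact hx3 hxm
    · exact hx2 (hCBA n m hlt (hB_subCA m hxm))
  have hInotB' : ∀ n m, ∀ x ∈ (bwd n).tail.dropLast, x ∉ (↑(B m) : Set V) := by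
    intro n m x hx hxm
    obtain ⟨hx1, hx2, hx3⟩ := hbwdI n x hx
    rcases lt_trichotomy m n with hlt | rfl | hlt
    · exact hB_disjCB m x hxm (hCBA m n hlt hx1)
    · exact hx3 hxm
    · exact hx2 (hCBA n m hlt (hB_subCA m hxm))
  have hcross : ∀ (I J : ℕ → List V), (∀ n, ∀ x ∈ (I n).tail.dropLast,
        x ∈ comp hs (ZA n) ∧ x ∉ comp hs (ZB n) ∧ x ∉ (↑(B n) : Set V)) →
      (∀ n, ∀ x ∈ (J n).tail.dropLast,
        x ∈ comp hs (ZA n) ∧ x ∉ comp hs (ZB n) ∧ x ∉ (↑(B n) : Set V)) →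
      ∀ m n, m ≠ n → ∀ x ∈ (I m).tail.dropLast, x ∉ (J n).tail.dropLast := by
    intro I J hI hJ m n hmn x hxm hxn
    rcases Nat.lt_or_ge m n with hlt | hge
    · exact (hI m x hxm).2.1 (hCBA m n hlt (hJ n x hxn).1)
    · have hlt : n < m := lt_of_le_of_ne hge (Ne.symm hmn)
      exact (hJ n x hxn).2.1 (hCBA n m hlt (hI m x hxm).1)
  refine ⟨⟨fun n => (↑(B n) : Set V), fwd, bwd, fun n => (B n).finite_toSet,
    fun n => ⟨R (τ n), by exact_mod_cast hbase n⟩, ?_, hB_strong, hfwd, hbwd,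
    fun n c hc => by exact_mod_cast hfwd_head n c hc,
    fun n c hc => by exact_mod_cast hfwd_last n c hc,
    fun n c hc => by exact_mod_cast hbwd_head n c hc,
    fun n c hc => by exact_mod_cast hbwd_last n c hc,
    fun n x hx m => hInotB n m x hx,
    fun n x hx m => hInotB' n m x hx,
    fun m n hmn x hx => hcross fwd fwd hfwdI hfwdI m n hmn x hx,
    fun m n hmn x hx => hcross bwd bwd hbwdI hbwdI m n hmn x hx,
    ?_⟩, fun n => rfl, ?_, ?_⟩
  · -- bead_disj
    intro m n hmn
    rw [Set.disjoint_left]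
    rcases Nat.lt_or_ge m n with hlt | hge
    · intro x hxm hxn
      exact hdisjB m n hlt x hxn hxm
    · have hlt : n < m := lt_of_le_of_ne hge (Ne.symm hmn)
      intro x hxm hxn
      exact hdisjB n m hlt x hxm hxn
  · -- fwd_bwd_disj
    intro m n x hx hxn
    rcases eq_or_ne m n with rfl | hmn
    · exact hfb m x hx hxn
    · exact hcross fwd bwd hfwdI hbwdI m n hmn x hx hxn
  · -- NecklaceRepresents
    intro X
    refine ⟨comp hs X, comp_scc hs X, comp_tail hs X, ?_⟩
    have hmeet : {n : ℕ | ((↑(B n) : Set V) ∩ ↑X).Nonempty}.Finite := by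
      have hsub : {n : ℕ | ((↑(B n) : Set V) ∩ ↑X).Nonempty} ⊆
          ⋃ v ∈ (↑X : Set V), {n : ℕ | v ∈ (↑(B n) : Set V)} := by
        rintro n ⟨v, hv1, hv2⟩
        exact Set.mem_biUnion hv2 hv1
      refine Set.Finite.subset (Set.Finite.biUnion X.finite_toSet (fun v _ => ?_)) hsub
      apply Set.Subsingleton.finite
      intro i hi j hj
      by_contra hij
      rcases Nat.lt_or_ge i j with hlt | hge
      · exact hdisjB i j hlt v hj hi
      · exact hdisjB j i (lt_of_le_of_ne hge (Ne.symm hij)) v hi hj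
    obtain ⟨N0, hN0⟩ := hmeet.bddAbove
    obtain ⟨M, hM⟩ := comp_tail hs X
    refine ⟨max (N0 + 1) M, fun n hn => ?_⟩
    have hnN : N0 + 1 ≤ n := le_trans (le_max_left _ _) hn
    have hnM : M ≤ n := le_trans (le_max_right _ _) hn
    have hBX : ∀ x ∈ (↑(B n) : Set V), x ∈ ((↑X : Set V)ᶜ) := by
      intro x hx
      intro hxX
      have : n ∈ {n : ℕ | ((↑(B n) : Set V) ∩ ↑X).Nonempty} := ⟨x, hx, hxX⟩
      have := hN0 this
      omega
    have hbaseX : R (τ n) ∈ comp hs X := hM _ (le_trans hnM (hτ n))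
    intro b hb
    have h1 : ReachIn D ((↑X : Set V)ᶜ) (R (τ n)) b :=
      reachIn_mono hBX (hB_strong n _ (by exact_mod_cast hbase n) b hb)
    have h2 : ReachIn D ((↑X : Set V)ᶜ) b (R (τ n)) :=
      reachIn_mono hBX (hB_strong n b hb _ (by exact_mod_cast hbase n))
    exact (mem_scc_iff (comp_scc hs X) hbaseX).mpr ⟨h1, h2⟩
  · -- verts
    intro x hx
    have hC0 : ∀ n, comp hs (ZA n) ⊆ comp hs (ZA 0) :=
      fun n => comp_antitone hs (hZAmono 0 n (Nat.zero_le n))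
    rcases hx with hx | hx
    · obtain ⟨s, ⟨n, rfl⟩, hxs⟩ := hx
      exact hC0 n (hB_subCA n hxs)
    · obtain ⟨n, hx | hx⟩ := hx
      · exact hC0 n (hfwd_sub n x hx)
      · exact hC0 n (hbwd_sub n x hx)

open LEhelp in
set_option maxHeartbeats 1000000 in
/-- `D` has a limit edge between two distinct ends iff there are disjoint necklaces
representing them whose `n`-th beads are joined by an edge, for every `n`. -/
theorem limit_edge_iff_necklaces (D : V → V → Prop) (Rω Rη : ℕ → V)
    (hω : Solid D Rω) (hη : Solid D Rη) (hne : ¬ EndEquiv D Rω Rη) :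
    LimitEdgeEE D Rω Rη ↔
      ∃ (Nω Nη : Necklace D), NecklaceRepresents Nω Rω ∧ NecklaceRepresents Nη Rη ∧
        Disjoint Nω.verts Nη.verts ∧
        ∀ n, ∃ a ∈ Nω.bead n, ∃ b ∈ Nη.bead n, D a b := by
  classical
  constructor
  · intro hLim
    have hne' : ¬ ∀ X : Finset V, ∃ C, IsSCCIn D ((↑X : Set V)ᶜ) C ∧ HasTailIn Rω C ∧
        HasTailIn Rη C := hne
    rw [not_forall] at hne'
    obtain ⟨X0, hX0e⟩ := hne'
    rw [not_exists] at hX0e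
    obtain ⟨s0⟩ := init_ex (hsω := hω.2) (hsη := hη.2) hLim hX0e
    let St : ℕ → PreState D hω.2 hη.2 X0 :=
      fun n => Nat.rec s0 (fun _ s => (Classical.choice (step_ex hLim hX0e s)).t) n
    let SO : ∀ n, StepOut D (St n) := fun n => Classical.choice (step_ex hLim hX0e (St n))
    have hStS : ∀ n, St (n + 1) = (SO n).t := fun n => rfl
    have hk : ∀ n, n ≤ (St n).k := by
      intro n
      induction n with
      | zero => exact Nat.zero_le _
      | succ m ih =>
        have hh : (St (m + 1)).k = (St m).k + 1 := by rw [hStS m]; exact (SO m).hk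
        omega
    have hsucc : ∀ n, (St (n + 1)).ZA = (St n).ZB := fun n => by
      rw [hStS n]; exact (SO n).hZA
    obtain ⟨Nω, hbeadω, hrepω, hvertω⟩ := necklace_assemble hω.2
      (fun n => (St n).ZA) (fun n => (St n).ZB) (fun n => (St n).hAB) hsucc
      (fun n => (SO n).eω.B) (fun n => (SO n).eω.fwd) (fun n => (SO n).eω.bwd)
      (fun n => (St n).τω) (fun n => le_trans (hk n) (St n).hτωk)
      (fun n => by
        have := (SO n).eω.hB_pre (by exact_mod_cast (St n).hbaseω)
        exact_mod_cast this)
      (fun n => (SO n).eω.hB_strong) (fun n => (SO n).eω.hB_subCA)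
      (fun n => (SO n).eω.hB_disjCB) (fun n => (SO n).eω.hfwd) (fun n => (SO n).eω.hbwd)
      (fun n c hc => (SO n).eω.hfwd_head c hc)
      (fun n c hc => by
        have h1 : c ∈ (SO n).eω.pre' := (SO n).eω.hfwd_last c hc
        have h2 : c ∈ (St (n + 1)).preω := by rw [hStS n, (SO n).hpreω]; exact h1
        have := (SO (n + 1)).eω.hB_pre (by exact_mod_cast h2)
        exact_mod_cast this)
      (fun n c hc => by
        have h1 : c ∈ (SO n).eω.pre' := (SO n).eω.hbwd_head c hc
        have h2 : c ∈ (St (n + 1)).preω := by rw [hStS n, (SO n).hpreω]; exact h1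
        have := (SO (n + 1)).eω.hB_pre (by exact_mod_cast h2)
        exact_mod_cast this)
      (fun n c hc => (SO n).eω.hbwd_last c hc)
      (fun n => (SO n).eω.hfwdI) (fun n => (SO n).eω.hbwdI) (fun n => (SO n).eω.hfb)
      (fun n => (SO n).eω.hfwd_sub) (fun n => (SO n).eω.hbwd_sub)
    obtain ⟨Nη, hbeadη, hrepη, hvertη⟩ := necklace_assemble hη.2
      (fun n => (St n).ZA) (fun n => (St n).ZB) (fun n => (St n).hAB) hsucc
      (fun n => (SO n).eη.B) (fun n => (SO n).eη.fwd) (fun n => (SO n).eη.bwd)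
      (fun n => (St n).τη) (fun n => le_trans (hk n) (St n).hτηk)
      (fun n => by
        have := (SO n).eη.hB_pre (by exact_mod_cast (St n).hbaseη)
        exact_mod_cast this)
      (fun n => (SO n).eη.hB_strong) (fun n => (SO n).eη.hB_subCA)
      (fun n => (SO n).eη.hB_disjCB) (fun n => (SO n).eη.hfwd) (fun n => (SO n).eη.hbwd)
      (fun n c hc => (SO n).eη.hfwd_head c hc)
      (fun n c hc => by
        have h1 : c ∈ (SO n).eη.pre' := (SO n).eη.hfwd_last c hc
        have h2 : c ∈ (St (n + 1)).preη := by rw [hStS n, (SO n).hpreη]; exact h1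
        have := (SO (n + 1)).eη.hB_pre (by exact_mod_cast h2)
        exact_mod_cast this)
      (fun n c hc => by
        have h1 : c ∈ (SO n).eη.pre' := (SO n).eη.hbwd_head c hc
        have h2 : c ∈ (St (n + 1)).preη := by rw [hStS n, (SO n).hpreη]; exact h1
        have := (SO (n + 1)).eη.hB_pre (by exact_mod_cast h2)
        exact_mod_cast this)
      (fun n c hc => (SO n).eη.hbwd_last c hc)
      (fun n => (SO n).eη.hfwdI) (fun n => (SO n).eη.hbwdI) (fun n => (SO n).eη.hfb)
      (fun n => (SO n).eη.hfwd_sub) (fun n => (SO n).eη.hbwd_sub)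
    refine ⟨Nω, Nη, hrepω, hrepη, ?_, ?_⟩
    · have h0ω : Nω.verts ⊆ comp hω.2 X0 :=
        fun x hx => comp_antitone hω.2 (St 0).hX0 (hvertω hx)
      have h0η : Nη.verts ⊆ comp hη.2 X0 :=
        fun x hx => comp_antitone hη.2 (St 0).hX0 (hvertη hx)
      have hce : comp hω.2 X0 ≠ comp hη.2 X0 := fun heq =>
        hX0e _ ⟨comp_scc _ _, comp_tail _ _, heq ▸ comp_tail hη.2 X0⟩
      rw [Set.disjoint_left]
      intro x hxω hxη
      exact hce (scc_eq_of_inter (comp_scc _ _) (comp_scc _ _) ⟨x, h0ω hxω, h0η hxη⟩)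
    · intro n
      obtain ⟨a, ha, b, hb, hab⟩ := (SO n).hedgeB
      exact ⟨a, by rw [hbeadω n]; exact_mod_cast ha,
        b, by rw [hbeadη n]; exact_mod_cast hb, hab⟩
  · rintro ⟨Nω, Nη, hrω, hrη, hdisj, hedge⟩
    intro X C C' hC htC hC' htC' hCC'
    obtain ⟨Cw, hCw1, hCw2, n1, hn1⟩ := hrω X
    obtain ⟨Ce, hCe1, hCe2, n2, hn2⟩ := hrη X
    have hCeq : C = Cw := by
      obtain ⟨m1, hm1⟩ := htC
      obtain ⟨m2, hm2⟩ := hCw2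
      exact LEhelp.scc_eq_of_inter hC hCw1
        ⟨Rω (max m1 m2), hm1 _ (le_max_left _ _), hm2 _ (le_max_right _ _)⟩
    have hCeq' : C' = Ce := by
      obtain ⟨m1, hm1⟩ := htC'
      obtain ⟨m2, hm2⟩ := hCe2
      exact LEhelp.scc_eq_of_inter hC' hCe1
        ⟨Rη (max m1 m2), hm1 _ (le_max_left _ _), hm2 _ (le_max_right _ _)⟩
    obtain ⟨a, ha, b, hb, hab⟩ := hedge (max n1 n2)
    exact ⟨a, hCeq ▸ hn1 _ (le_max_left _ _) ha,
      b, hCeq' ▸ hn2 _ (le_max_right _ _) hb, hab⟩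
end

section
/- Let D be a digraph and let R, R′ be a ray and a reverse ray in D that are equivalent (there are infinitely many disjoint paths from R to R′ and from R′ to R). Then R is solid in D: for every finite vertex set X ⊆ V(D), R has a tail contained in a single strong component of D − X; moreover this strong component also contains a tail of R′. -/
variable {V : Type*}

section Helpers

private lemma exists_path_avoiding {P : ℕ → List V}
    (hdisj : ∀ j k, j ≠ k → ∀ x ∈ P j, x ∉ P k)
    {F : Set V} (hF : F.Finite) :
    ∃ k, ∀ x ∈ P k, x ∉ F := by
  by_contra h
  push_neg at h
  choose f hf1 hf2 using h
  have hinj : Function.Injective f := by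
    intro j k hjk
    by_contra hne
    exact hdisj j k hne _ (hf1 j) (hjk ▸ hf1 k)
  exact (hF.subset (Set.range_subset_iff.mpr hf2)).not_infinite
    (Set.infinite_range_of_injective hinj)

private lemma tail_avoids {R : ℕ → V} (hinj : Function.Injective R) {X : Set V}
    (hX : X.Finite) : ∃ n₀, ∀ i, n₀ ≤ i → R i ∉ X := by
  have hfin : (R ⁻¹' X).Finite := hX.preimage hinj.injOn
  obtain ⟨n₀, hn₀⟩ := hfin.bddAbove
  exact ⟨n₀ + 1, fun i hi hmem => by have := hn₀ hmem; omega⟩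

private lemma head_index {R : ℕ → V} {v : V} (hv : v ∈ Set.range R) {m : ℕ}
    (hav : v ∉ R '' {i | i < m}) : ∃ c, m ≤ c ∧ v = R c := by
  obtain ⟨c, rfl⟩ := hv
  exact ⟨c, by by_contra h; exact hav ⟨c, by simp only [Set.mem_setOf_eq]; omega, rfl⟩, rfl⟩

private lemma reach_chain {D : V → V → Prop} {S : Set V} :
    ∀ (l : List V) (a : V), List.Chain D a l → (∀ x ∈ l, x ∈ S) →
      Relation.ReflTransGen (fun x y => y ∈ S ∧ D x y) a
        ((a :: l).getLast (List.cons_ne_nil a l)) := by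
  intro l
  induction l with
  | nil => intro a _ _; simpa using Relation.ReflTransGen.refl
  | cons b t ih =>
      intro a hc hmem
      rw [List.Chain, List.chain_cons] at hc
      have h2 := ih b hc.2 (fun x hx => hmem x (List.mem_cons_of_mem b hx))
      have heq : ((a :: b :: t).getLast (List.cons_ne_nil _ _)) =
          ((b :: t).getLast (List.cons_ne_nil _ _)) :=
        List.getLast_cons (List.cons_ne_nil _ _)
      rw [heq]
      exact Relation.ReflTransGen.head ⟨hmem b List.mem_cons_self, hc.1⟩ h2

private lemma reach_of_pathList {D : V → V → Prop} {S : Set V} {l : List V} {a b : V}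
    (hp : IsPathList D l) (ha : l.head? = some a) (hb : l.getLast? = some b)
    (hS : ∀ x ∈ l, x ∈ S) :
    Relation.ReflTransGen (fun x y => y ∈ S ∧ D x y) a b := by
  obtain ⟨hne, -, hchain⟩ := hp
  cases l with
  | nil => simp at ha
  | cons x t =>
      simp only [List.head?_cons, Option.some.injEq] at ha
      rw [List.getLast?_eq_getLast (List.cons_ne_nil x t), Option.some.injEq] at hb
      rw [← ha, ← hb]
      exact reach_chain t x hchain (fun y hy => hS y (List.mem_cons_of_mem x hy))

private lemma reach_ray {D : V → V → Prop} {S : Set V} {R : ℕ → V}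
    (hR : ∀ n, D (R n) (R (n + 1))) {m c : ℕ} (h : m ≤ c)
    (hmem : ∀ i, m ≤ i → R i ∈ S) :
    Relation.ReflTransGen (fun x y => y ∈ S ∧ D x y) (R m) (R c) := by
  induction c, h using Nat.le_induction with
  | base => exact Relation.ReflTransGen.refl
  | succ c hc ih =>
      exact ih.tail ⟨hmem _ (by omega), hR c⟩

private lemma reach_revray {D : V → V → Prop} {S : Set V} {R : ℕ → V}
    (hR : ∀ n, D (R (n + 1)) (R n)) {a d : ℕ} (h : a ≤ d)
    (hmem : ∀ i, a ≤ i → R i ∈ S) :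
    Relation.ReflTransGen (fun x y => y ∈ S ∧ D x y) (R d) (R a) := by
  induction d, h using Nat.le_induction with
  | base => exact Relation.ReflTransGen.refl
  | succ d hd ih =>
      exact Relation.ReflTransGen.head ⟨hmem _ hd, hR d⟩ ih

end Helpers

/-- A ray equivalent to a reverse ray is solid; moreover, for every finite `X` their tails lie
in a common strong component of `D − X`. -/
theorem equivalent_ray_revray_solid (D : V → V → Prop) (R R' : ℕ → V)
    (hR : IsRay D R) (hR' : IsRevRay D R')
    (h₁ : DisjointPathsFrom D (Set.range R) (Set.range R'))
    (h₂ : DisjointPathsFrom D (Set.range R') (Set.range R)) :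
    ∀ X : Finset V, ∃ C, IsSCCIn D ((↑X : Set V)ᶜ) C ∧ HasTailIn R C ∧ HasTailIn R' C := by
  intro X
  obtain ⟨hRinj, hRstep⟩ := hR
  obtain ⟨hR'inj, hR'step⟩ := hR'
  obtain ⟨n₀, hn₀⟩ := tail_avoids hRinj X.finite_toSet
  obtain ⟨n₁, hn₁⟩ := tail_avoids hR'inj X.finite_toSet
  obtain ⟨P, hPpath, hPdisj, hPhead, hPlast, -, -⟩ := h₁
  obtain ⟨Q, hQpath, hQdisj, hQhead, hQlast, -, -⟩ := h₂
  set S : Set V := (↑X : Set V)ᶜ with hSdef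
  have hmemR : ∀ i, n₀ ≤ i → R i ∈ S := fun i hi => hn₀ i hi
  have hmemR' : ∀ i, n₁ ≤ i → R' i ∈ S := fun i hi => hn₁ i hi
  have hfinIm : ∀ (f : ℕ → V) (n : ℕ), (f '' {i | i < n}).Finite :=
    fun f n => (Set.finite_Iio n).image f
  -- choose the backward connecting path q : R' → R
  obtain ⟨k0, hk0⟩ := exists_path_avoiding hQdisj
    ((X.finite_toSet.union (hfinIm R n₀)).union (hfinIm R' n₁))
  obtain ⟨a', hqh, hqhr⟩ := hQhead k0
  obtain ⟨b', hql, hqlr⟩ := hQlast k0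
  have ha'mem : a' ∈ Q k0 := List.mem_of_mem_head? (by simp [hqh])
  have hb'mem : b' ∈ Q k0 := List.mem_of_mem_getLast? (by simp [hql])
  obtain ⟨a, ha, rfl⟩ := head_index hqhr (fun h => hk0 a' ha'mem (Or.inr h))
  obtain ⟨b, hb, rfl⟩ := head_index hqlr (fun h => hk0 b' hb'mem (Or.inl (Or.inr h)))
  have hq_reach : Relation.ReflTransGen (fun x y => y ∈ S ∧ D x y) (R' a) (R b) :=
    reach_of_pathList (hQpath k0) hqh hql
      (fun x hx hxX => hk0 x hx (Or.inl (Or.inl hxX)))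
  -- reach from tail of R to R' a
  have toA : ∀ m, b ≤ m → Relation.ReflTransGen (fun x y => y ∈ S ∧ D x y) (R m) (R' a) := by
    intro m hm
    obtain ⟨k, hk⟩ := exists_path_avoiding hPdisj
      ((X.finite_toSet.union (hfinIm R m)).union (hfinIm R' a))
    obtain ⟨c', hph, hphr⟩ := hPhead k
    obtain ⟨d', hpl, hplr⟩ := hPlast k
    obtain ⟨c, hc, rfl⟩ := head_index hphr
      (fun h => hk c' (List.mem_of_mem_head? (by simp [hph])) (Or.inl (Or.inr h)))
    obtain ⟨d, hd, rfl⟩ := head_index hplr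
      (fun h => hk d' (List.mem_of_mem_getLast? (by simp [hpl])) (Or.inr h))
    have hp_reach := reach_of_pathList (hPpath k) hph hpl
      (fun x hx hxX => hk x hx (Or.inl (Or.inl hxX)))
    have h1 := reach_ray hRstep hc (fun i hi => hmemR i (by omega))
    have h2 := reach_revray hR'step hd (fun i hi => hmemR' i (by omega))
    exact (h1.trans hp_reach).trans h2
  -- reach from R' a to tail of R
  have fromA : ∀ m, b ≤ m →
      Relation.ReflTransGen (fun x y => y ∈ S ∧ D x y) (R' a) (R m) := by
    intro m hm
    exact hq_reach.trans (reach_ray hRstep hm (fun i hi => hmemR i (by omega)))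
  -- reach from tail of R' to R' a
  have toA' : ∀ m, a ≤ m →
      Relation.ReflTransGen (fun x y => y ∈ S ∧ D x y) (R' m) (R' a) := fun m hm =>
    reach_revray hR'step hm (fun i hi => hmemR' i (by omega))
  -- reach from R' a to tail of R'
  have fromA' : ∀ m, a ≤ m →
      Relation.ReflTransGen (fun x y => y ∈ S ∧ D x y) (R' a) (R' m) := by
    intro m hm
    obtain ⟨k, hk⟩ := exists_path_avoiding hPdisj
      ((X.finite_toSet.union (hfinIm R b)).union (hfinIm R' m))
    obtain ⟨c', hph, hphr⟩ := hPhead k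
    obtain ⟨d', hpl, hplr⟩ := hPlast k
    obtain ⟨c, hc, rfl⟩ := head_index hphr
      (fun h => hk c' (List.mem_of_mem_head? (by simp [hph])) (Or.inl (Or.inr h)))
    obtain ⟨d, hd, rfl⟩ := head_index hplr
      (fun h => hk d' (List.mem_of_mem_getLast? (by simp [hpl])) (Or.inr h))
    have hp_reach := reach_of_pathList (hPpath k) hph hpl
      (fun x hx hxX => hk x hx (Or.inl (Or.inl hxX)))
    have h1 := reach_ray hRstep hc (fun i hi => hmemR i (by omega))
    have h2 := reach_revray hR'step hd (fun i hi => hmemR' i (by omega))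
    exact ((hq_reach.trans h1).trans hp_reach).trans h2
  have haS : R' a ∈ S := hmemR' a ha
  refine ⟨{x | ReachIn D S (R' a) x ∧ ReachIn D S x (R' a)}, ⟨R' a, haS, rfl⟩,
    ⟨b, fun m hm => ?_⟩, ⟨a, fun m hm => ?_⟩⟩
  · have hmS : R m ∈ S := hmemR m (by omega)
    exact ⟨⟨haS, hmS, fromA m hm⟩, ⟨hmS, haS, toA m hm⟩⟩
  · have hmS : R' m ∈ S := hmemR' m (by omega)
    exact ⟨⟨haS, hmS, fromA' m hm⟩, ⟨hmS, haS, toA' m hm⟩⟩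
end
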